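/- arXiv:1611.07183 — 4 statements merged into one kernel-verified Lean document; each statement's English description precedes it below -/
import Mathlib

section
/- Let n ≥ 3 and suppose a_n ≥ 2 and a_{n+1} = a_{n+2} = 1. Then q_n − q_{n-1}, 2q_{n-1} + q_n, 2q_n, 2q_{n+1} are four successive elements of 𝔔(α). -/
open Filter Real Set

/-- Iterates of the Gauss map starting from `α`: `x₀ = α`, `x_{n+1} = 1 / fract (xₙ)`. -/
noncomputable def gaussIter (α : ℝ) : ℕ → ℝ
  | 0 => α
  | n + 1 => (Int.fract (gaussIter α n))⁻¹

/-- Partial quotients of the continued fraction `α = [a₀; a₁, a₂, …]`. -/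
noncomputable def cfA (α : ℝ) (n : ℕ) : ℤ := ⌊gaussIter α n⌋

/-- Denominators of convergents, with shifted index: `cfQ α 0 = q₋₁ = 0`,
`cfQ α 1 = q₀ = 1`, and `cfQ α (n+1) = qₙ` where `qₙ = aₙ q_{n-1} + q_{n-2}`. -/
noncomputable def cfQ (α : ℝ) : ℕ → ℤ
  | 0 => 0
  | 1 => 1
  | n + 2 => cfA α (n + 1) * cfQ α (n + 1) + cfQ α n

/-- Numerators of convergents, with shifted index: `cfP α 0 = p₋₁ = 1`,
`cfP α 1 = p₀ = ⌊α⌋`, and `cfP α (n+1) = pₙ` where `pₙ = aₙ p_{n-1} + p_{n-2}`. -/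
noncomputable def cfP (α : ℝ) : ℕ → ℤ
  | 0 => 1
  | 1 => ⌊α⌋
  | n + 2 => cfA α (n + 1) * cfP α (n + 1) + cfP α n

/-- `qₙ`, the denominator of the `n`-th convergent of `α`. -/
noncomputable def cfDen (α : ℝ) (n : ℕ) : ℤ := cfQ α (n + 1)

/-- `pₙ`, the numerator of the `n`-th convergent of `α`. -/
noncomputable def cfNum (α : ℝ) (n : ℕ) : ℤ := cfP α (n + 1)

/-- `ξₙ = |qₙ α − pₙ|`. -/
noncomputable def cfXi (α : ℝ) (n : ℕ) : ℝ := |(cfDen α n : ℝ) * α - (cfNum α n : ℝ)|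

/-- `ψ_α(t) = min { ‖qα‖ : q ∈ ℤ, 1 ≤ q ≤ t }`. -/
noncomputable def psiFn (α t : ℝ) : ℝ :=
  sInf {x : ℝ | ∃ p q : ℤ, 1 ≤ q ∧ (q : ℝ) ≤ t ∧ x = |(q : ℝ) * α - (p : ℝ)|}

/-- `ψ_α^[2](t)`: the same minimum but over pairs `(p,q)` that are not `(pₙ,qₙ)` for any `n ≥ 0`. -/
noncomputable def psi2Fn (α t : ℝ) : ℝ :=
  sInf {x : ℝ | ∃ p q : ℤ, 1 ≤ q ∧ (q : ℝ) ≤ t ∧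
    (∀ n : ℕ, ¬(p = cfNum α n ∧ q = cfDen α n)) ∧ x = |(q : ℝ) * α - (p : ℝ)|}

/-- `ψ_α^[2]*(t)`: the same minimum but over pairs `(p,q)` with `p/q ≠ pₙ/qₙ` for all `n ≥ 0`. -/
noncomputable def psi2sFn (α t : ℝ) : ℝ :=
  sInf {x : ℝ | ∃ p q : ℤ, 1 ≤ q ∧ (q : ℝ) ≤ t ∧
    (∀ n : ℕ, (p : ℝ) / (q : ℝ) ≠ (cfNum α n : ℝ) / (cfDen α n : ℝ)) ∧
    x = |(q : ℝ) * α - (p : ℝ)|}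

/-- `λ(α) = liminf_{t→∞} t · ψ_α(t)`. -/
noncomputable def lamOf (α : ℝ) : ℝ := Filter.liminf (fun t : ℝ => t * psiFn α t) Filter.atTop

/-- `𝔨(α) = liminf_{t→∞} t · ψ_α^[2](t)`. -/
noncomputable def kOf (α : ℝ) : ℝ := Filter.liminf (fun t : ℝ => t * psi2Fn α t) Filter.atTop

/-- `𝔨*(α) = liminf_{t→∞} t · ψ_α^[2]*(t)`. -/
noncomputable def ksOf (α : ℝ) : ℝ := Filter.liminf (fun t : ℝ => t * psi2sFn α t) Filter.atTop

/-- `α` and `β` are equivalent: `β = (aα+b)/(cα+d)` with `a,b,c,d ∈ ℤ`, `|ad − bc| = 1`. -/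
def CFEquiv (α β : ℝ) : Prop :=
  ∃ a b c d : ℤ, |a * d - b * c| = 1 ∧ β = ((a : ℝ) * α + (b : ℝ)) / ((c : ℝ) * α + (d : ℝ))

/-- The spectrum `𝕃₂ = {𝔨(α) : α irrational}`. -/
def L2 : Set ℝ := {x : ℝ | ∃ α : ℝ, Irrational α ∧ kOf α = x}

/-- The spectrum `𝕃₂* = {𝔨*(α) : α irrational}`. -/
def L2s : Set ℝ := {x : ℝ | ∃ α : ℝ, Irrational α ∧ ksOf α = x}

/-- `𝔔(α)`: the set of positive integers at which `ψ_α^[2]` is discontinuous. -/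
def QSet (α : ℝ) : Set ℤ := {m : ℤ | 0 < m ∧ ¬ ContinuousAt (psi2Fn α) (m : ℝ)}

/-- `𝔛(α)`: the set of positive integers at which `ψ_α^[2]*` is discontinuous. -/
def XSet (α : ℝ) : Set ℤ := {m : ℤ | 0 < m ∧ ¬ ContinuousAt (psi2sFn α) (m : ℝ)}

/-- The members of the list `l` are successive elements of `S`: they belong to `S`,
are listed in increasing order, and no element of `S` lies strictly between
consecutive listed ones. -/
def SuccessiveIn (S : Set ℤ) (l : List ℤ) : Prop :=
  (∀ x ∈ l, x ∈ S) ∧ l.Chain' (fun x y => x < y ∧ ∀ z ∈ S, ¬(x < z ∧ z < y))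

/-- `κ¹ₙ = (q_{n-2} + q_{n-1})(ξ_{n-2} − ξ_{n-1})`. -/
noncomputable def kap1 (α : ℝ) (n : ℕ) : ℝ :=
  ((cfDen α (n - 2) + cfDen α (n - 1) : ℤ) : ℝ) * (cfXi α (n - 2) - cfXi α (n - 1))

/-- `κ²ₙ = (qₙ − q_{n-1})(ξ_{n-1} + ξₙ)`. -/
noncomputable def kap2 (α : ℝ) (n : ℕ) : ℝ :=
  ((cfDen α n - cfDen α (n - 1) : ℤ) : ℝ) * (cfXi α (n - 1) + cfXi α n)

/-- `κ³ₙ = (2q_{n-2} + q_{n-1})(2ξ_{n-2} − ξ_{n-1})`. -/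
noncomputable def kap3 (α : ℝ) (n : ℕ) : ℝ :=
  ((2 * cfDen α (n - 2) + cfDen α (n - 1) : ℤ) : ℝ) * (2 * cfXi α (n - 2) - cfXi α (n - 1))

/-- `κ⁴ₙ = 4 q_{n-1} ξ_{n-1}`. -/
noncomputable def kap4 (α : ℝ) (n : ℕ) : ℝ :=
  ((4 * cfDen α (n - 1) : ℤ) : ℝ) * cfXi α (n - 1)


section Stmt14Aux

variable {α : ℝ}

private lemma gauss_irrat (hα : Irrational α) : ∀ k, Irrational (gaussIter α k)
  | 0 => hα
  | k + 1 => by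
    have h := gauss_irrat hα k
    have hf : Irrational (Int.fract (gaussIter α k)) := by
      rw [← Int.self_sub_floor]
      exact h.sub_intCast ⌊gaussIter α k⌋
    exact hf.inv

private lemma fract_pos (hα : Irrational α) (k : ℕ) :
    0 < Int.fract (gaussIter α k) := by
  rcases (Int.fract_nonneg (gaussIter α k)).lt_or_eq with h | h
  · exact h
  · exfalso
    have hf : Irrational (Int.fract (gaussIter α k)) := by
      rw [← Int.self_sub_floor]
      exact (gauss_irrat hα k).sub_intCast ⌊gaussIter α k⌋
    rw [← h] at hf
    exact hf ⟨0, by norm_num⟩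

private lemma gauss_gt_one (hα : Irrational α) (k : ℕ) : 1 < gaussIter α (k + 1) := by
  have h0 : 0 < Int.fract (gaussIter α k) := fract_pos hα k
  have h1 : Int.fract (gaussIter α k) < 1 := Int.fract_lt_one _
  show 1 < (Int.fract (gaussIter α k))⁻¹
  rw [lt_inv_comm₀ (by norm_num) h0]
  simpa using h1

private lemma cfA_one_le (hα : Irrational α) (k : ℕ) : 1 ≤ cfA α (k + 1) := by
  have := gauss_gt_one hα k
  have : (1:ℝ) ≤ gaussIter α (k+1) := this.le
  exact_mod_cast Int.le_floor.2 (by exact_mod_cast this)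

private lemma cfQ_pos (hα : Irrational α) : ∀ k, 0 ≤ cfQ α k ∧ 1 ≤ cfQ α (k + 1)
  | 0 => by
    rw [show cfQ α 0 = 0 from rfl, show cfQ α 1 = 1 from rfl]
    exact ⟨le_refl 0, le_refl 1⟩
  | k + 1 => by
    obtain ⟨h0, h1⟩ := cfQ_pos hα k
    refine ⟨le_trans (by norm_num) h1, ?_⟩
    have ha := cfA_one_le hα k
    show 1 ≤ cfA α (k+1) * cfQ α (k+1) + cfQ α k
    nlinarith

private lemma cfQ_mono (hα : Irrational α) (k : ℕ) : cfQ α (k + 1) ≤ cfQ α (k + 2) := by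
  obtain ⟨h0, h1⟩ := cfQ_pos hα k
  have ha := cfA_one_le hα k
  show cfQ α (k+1) ≤ cfA α (k+1) * cfQ α (k+1) + cfQ α k
  nlinarith

private lemma cfDen_mono (hα : Irrational α) : Monotone (cfDen α) :=
  monotone_nat_of_le_succ fun k => cfQ_mono hα k

private lemma cfDen_pos (hα : Irrational α) (k : ℕ) : 1 ≤ cfDen α k :=
  (cfQ_pos hα k).2

/-- `Dₖ = Qₖ α - Pₖ`. -/
noncomputable def Dk (α : ℝ) (k : ℕ) : ℝ := (cfQ α k : ℝ) * α - (cfP α k : ℝ)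

/-- `Eₖ = (-1)^(k+1) Dₖ`. -/
noncomputable def Ek (α : ℝ) (k : ℕ) : ℝ := (-1) ^ (k + 1) * Dk α k

private lemma Ek_zero : Ek α 0 = 1 := by
  show (-1 : ℝ) ^ (0 + 1) * ((cfQ α 0 : ℝ) * α - (cfP α 0 : ℝ)) = 1
  rw [show cfQ α 0 = 0 from rfl, show cfP α 0 = 1 from rfl]
  norm_num

private lemma Ek_succ (hα : Irrational α) :
    ∀ k, Ek α (k + 1) = Int.fract (gaussIter α k) * Ek α k
  | 0 => by
    have h1 : Ek α 1 = α - (⌊α⌋ : ℝ) := by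
      show (-1 : ℝ) ^ (1 + 1) * ((cfQ α 1 : ℝ) * α - (cfP α 1 : ℝ)) = _
      rw [show cfQ α 1 = 1 from rfl, show cfP α 1 = ⌊α⌋ from rfl]
      push_cast; ring
    rw [h1, Ek_zero, show gaussIter α 0 = α from rfl, mul_one, ← Int.self_sub_floor]
  | k + 1 => by
    have IH := Ek_succ hα k
    have hfne : Int.fract (gaussIter α k) ≠ 0 := ne_of_gt (fract_pos hα k)
    have hx : gaussIter α (k + 1) = (Int.fract (gaussIter α k))⁻¹ := rfl
    have h1 : gaussIter α (k + 1) * Ek α (k + 1) = Ek α k := by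
      rw [hx, IH]; field_simp
    have hrec : Ek α (k + 2) = -(cfA α (k + 1) : ℝ) * Ek α (k + 1) + Ek α k := by
      simp only [Ek, Dk]
      have : cfQ α (k + 2) = cfA α (k + 1) * cfQ α (k + 1) + cfQ α k := rfl
      rw [this]
      have : cfP α (k + 2) = cfA α (k + 1) * cfP α (k + 1) + cfP α k := rfl
      rw [this]
      push_cast
      ring
    have hfr : Int.fract (gaussIter α (k + 1)) = gaussIter α (k + 1) - (cfA α (k + 1) : ℝ) := by
      rw [show cfA α (k+1) = ⌊gaussIter α (k+1)⌋ from rfl, Int.self_sub_floor]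
    rw [hrec, hfr]
    linear_combination -h1

private lemma Ek_pos (hα : Irrational α) : ∀ k, 0 < Ek α k
  | 0 => by rw [Ek_zero]; norm_num
  | k + 1 => by
    rw [Ek_succ hα k]
    exact mul_pos (fract_pos hα k) (Ek_pos hα k)

private lemma Ek_lt (hα : Irrational α) (k : ℕ) : Ek α (k + 1) < Ek α k := by
  rw [Ek_succ hα k]
  nlinarith [fract_pos hα k, Int.fract_lt_one (gaussIter α k), Ek_pos hα k]

private lemma Ek_rec (k : ℕ) :
    Ek α k = (cfA α (k + 1) : ℝ) * Ek α (k + 1) + Ek α (k + 2) := by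
  simp only [Ek, Dk]
  have h1 : cfQ α (k + 2) = cfA α (k + 1) * cfQ α (k + 1) + cfQ α k := rfl
  have h2 : cfP α (k + 2) = cfA α (k + 1) * cfP α (k + 1) + cfP α k := rfl
  rw [h1, h2]
  push_cast
  ring

private lemma Dk_eq (m : ℕ) : Dk α (m + 1) = (-1) ^ m * Ek α (m + 1) := by
  simp only [Ek]
  rcases Nat.even_or_odd m with h | h
  · rw [h.neg_one_pow]
    have : (-1 : ℝ) ^ (m + 1 + 1) = 1 := (h.add even_two : Even (m+2)).neg_one_pow
    rw [this]; ring
  · rw [h.neg_one_pow]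
    have : (-1 : ℝ) ^ (m + 1 + 1) = -1 := by
      have : Odd (m + 2) := by rcases h with ⟨j, rfl⟩; exact ⟨j + 1, by ring⟩
      exact this.neg_one_pow
    rw [this]; ring

private lemma cfXi_eq (hα : Irrational α) (m : ℕ) : cfXi α m = Ek α (m + 1) := by
  have h1 : cfXi α m = |Dk α (m + 1)| := rfl
  rw [h1, Dk_eq]
  rcases Nat.even_or_odd m with h | h
  · rw [h.neg_one_pow, one_mul, abs_of_pos (Ek_pos hα (m + 1))]
  · rw [h.neg_one_pow]
    rw [show (-1 : ℝ) * Ek α (m+1) = -(Ek α (m+1)) by ring, abs_neg,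
      abs_of_pos (Ek_pos hα (m + 1))]

private lemma dDen_eq (hα : Irrational α) (m : ℕ) :
    (cfDen α m : ℝ) * α - (cfNum α m : ℝ) = (-1) ^ m * cfXi α m := by
  rw [cfXi_eq hα, ← Dk_eq]
  rfl

private lemma cfDet (k : ℕ) :
    cfP α (k + 1) * cfQ α k - cfP α k * cfQ α (k + 1) = (-1) ^ (k + 1) := by
  induction k with
  | zero => simp [cfP, cfQ]
  | succ k IH =>
    have h1 : cfQ α (k + 2) = cfA α (k + 1) * cfQ α (k + 1) + cfQ α k := rfl
    have h2 : cfP α (k + 2) = cfA α (k + 1) * cfP α (k + 1) + cfP α k := rfl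
    rw [h1, h2, pow_succ]
    linear_combination (-1 : ℤ) * IH


private lemma decomp (b c pb pc p q : ℤ)
    (hdet : pc * b - pb * c = 1 ∨ pc * b - pb * c = -1) :
    ∃ u v : ℤ, q = u * c + v * b ∧ p = u * pc + v * pb := by
  rcases hdet with h | h
  · exact ⟨p * b - q * pb, q * pc - p * c,
      by linear_combination (-q) * h, by linear_combination (-p) * h⟩
  · exact ⟨q * pb - p * b, p * c - q * pc,
      by linear_combination q * h, by linear_combination p * h⟩

private lemma abstract_key (α : ℝ) (b c pb pc : ℤ) (x y z e : ℝ)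
    (hb : 1 ≤ b) (hc : 2 * b + 1 ≤ c)
    (hz : 0 < z) (hzx : z < x) (hxz : x < 2 * z) (hy : y = x + z)
    (he : e = 1 ∨ e = -1)
    (hdc : (c : ℝ) * α - (pc : ℝ) = e * x)
    (hdb : (b : ℝ) * α - (pb : ℝ) = -(e * y))
    (hdet : pc * b - pb * c = 1 ∨ pc * b - pb * c = -1)
    (p q : ℤ) (hq1 : 1 ≤ q) :
    (p = pb ∧ q = b) ∨ (p = pc ∧ q = c) ∨
    (p = pc + pb ∧ q = c + b) ∨ (p = 2 * pc + pb ∧ q = 2 * c + b) ∨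
    (p = pc - pb ∧ q = c - b ∧ |(q : ℝ) * α - (p : ℝ)| = x + y) ∨
    (p = pc + 2 * pb ∧ q = c + 2 * b ∧ |(q : ℝ) * α - (p : ℝ)| = 2 * y - x) ∨
    (p = 2 * pc ∧ q = 2 * c ∧ |(q : ℝ) * α - (p : ℝ)| = 2 * x) ∨
    (p = 2 * pc + 2 * pb ∧ q = 2 * c + 2 * b ∧ |(q : ℝ) * α - (p : ℝ)| = 2 * z) ∨
    (2 * c + 2 * b + 1 ≤ q) ∨
    (x + y + z ≤ |(q : ℝ) * α - (p : ℝ)|) := by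
  obtain ⟨u, v, hquv, hpuv⟩ := decomp b c pb pc p q hdet
  have hx : 0 < x := lt_trans hz hzx
  have hy0 : 0 < y := by rw [hy]; linarith
  have habs : |(q : ℝ) * α - (p : ℝ)| = |(u : ℝ) * x - (v : ℝ) * y| := by
    have h1 : (q : ℝ) * α - (p : ℝ) = e * ((u : ℝ) * x - (v : ℝ) * y) := by
      have h2 : (q : ℝ) * α - (p : ℝ)
          = (u : ℝ) * ((c : ℝ) * α - pc) + (v : ℝ) * ((b : ℝ) * α - pb) := by
        rw [hquv, hpuv]; push_cast; ring
      rw [h2, hdc, hdb]; ring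
    rcases he with rfl | rfl
    · rw [h1, one_mul]
    · rw [h1, show (-1 : ℝ) * ((u : ℝ) * x - (v : ℝ) * y)
        = -((u : ℝ) * x - (v : ℝ) * y) by ring, abs_neg]
  have hu3 : u ≤ -1 ∨ u = 0 ∨ u = 1 ∨ u = 2 ∨ 3 ≤ u := by omega
  rcases hu3 with hu | rfl | rfl | rfl | hu
  · -- u ≤ -1
    have h1 : (-2 * u) * b < v * b := by nlinarith
    have hv : 3 ≤ v := by
      have := lt_of_mul_lt_mul_right h1 (by omega : (0 : ℤ) ≤ b)
      omega
    have hvR : (3 : ℝ) ≤ (v : ℝ) := by exact_mod_cast hv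
    have huR : (u : ℝ) ≤ -1 := by exact_mod_cast hu
    refine Or.inr (Or.inr (Or.inr (Or.inr (Or.inr (Or.inr (Or.inr (Or.inr (Or.inr ?_))))))))
    rw [habs, abs_of_nonpos (by nlinarith)]
    nlinarith
  · -- u = 0
    have hv1 : 1 ≤ v := by nlinarith
    rcases eq_or_lt_of_le hv1 with hv | hv
    · subst hv
      exact Or.inl ⟨by omega, by omega⟩
    · have hvR : (2 : ℝ) ≤ (v : ℝ) := by exact_mod_cast (by omega : (2 : ℤ) ≤ v)
      refine Or.inr (Or.inr (Or.inr (Or.inr (Or.inr (Or.inr (Or.inr (Or.inr (Or.inr ?_))))))))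
      rw [habs, abs_of_nonpos (by push_cast; nlinarith)]
      push_cast
      nlinarith
  · -- u = 1
    have hv6 : v ≤ -2 ∨ v = -1 ∨ v = 0 ∨ v = 1 ∨ v = 2 ∨ 3 ≤ v := by omega
    rcases hv6 with hv | rfl | rfl | rfl | rfl | hv
    · have hvR : (v : ℝ) ≤ -2 := by exact_mod_cast hv
      refine Or.inr (Or.inr (Or.inr (Or.inr (Or.inr (Or.inr (Or.inr (Or.inr (Or.inr ?_))))))))
      rw [habs, abs_of_nonneg (by push_cast; nlinarith)]
      push_cast
      nlinarith
    · refine Or.inr (Or.inr (Or.inr (Or.inr (Or.inl ⟨by omega, by omega, ?_⟩))))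
      rw [habs]; push_cast
      rw [abs_of_nonneg (by nlinarith)]; ring
    · exact Or.inr (Or.inl ⟨by omega, by omega⟩)
    · exact Or.inr (Or.inr (Or.inl ⟨by omega, by omega⟩))
    · refine Or.inr (Or.inr (Or.inr (Or.inr (Or.inr (Or.inl ⟨by omega, by omega, ?_⟩)))))
      rw [habs]; push_cast
      rw [abs_of_nonpos (by nlinarith)]; ring
    · have hvR : (3 : ℝ) ≤ (v : ℝ) := by exact_mod_cast hv
      refine Or.inr (Or.inr (Or.inr (Or.inr (Or.inr (Or.inr (Or.inr (Or.inr (Or.inr ?_))))))))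
      rw [habs, abs_of_nonpos (by push_cast; nlinarith)]
      push_cast
      nlinarith
  · -- u = 2
    have hv5 : v ≤ -1 ∨ v = 0 ∨ v = 1 ∨ v = 2 ∨ 3 ≤ v := by omega
    rcases hv5 with hv | rfl | rfl | rfl | hv
    · have hvR : (v : ℝ) ≤ -1 := by exact_mod_cast hv
      refine Or.inr (Or.inr (Or.inr (Or.inr (Or.inr (Or.inr (Or.inr (Or.inr (Or.inr ?_))))))))
      rw [habs, abs_of_nonneg (by push_cast; nlinarith)]
      push_cast
      nlinarith
    · refine Or.inr (Or.inr (Or.inr (Or.inr (Or.inr (Or.inr (Or.inl ⟨by omega, by omega, ?_⟩))))))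
      rw [habs]; push_cast
      rw [abs_of_nonneg (by nlinarith)]; ring
    · exact Or.inr (Or.inr (Or.inr (Or.inl ⟨by omega, by omega⟩)))
    · refine Or.inr (Or.inr (Or.inr (Or.inr (Or.inr (Or.inr (Or.inr (Or.inl ⟨by omega, by omega, ?_⟩)))))))
      rw [habs]; push_cast
      rw [abs_of_nonpos (by nlinarith)]
      linarith
    · have h1 : 3 * b ≤ v * b := by nlinarith
      refine Or.inr (Or.inr (Or.inr (Or.inr (Or.inr (Or.inr (Or.inr (Or.inr (Or.inl ?_))))))))
      omega
  · -- 3 ≤ u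
    have hv2 : v ≤ -1 ∨ 0 ≤ v := by omega
    rcases hv2 with hv | hv
    · have hvR : (v : ℝ) ≤ -1 := by exact_mod_cast hv
      have huR : (3 : ℝ) ≤ (u : ℝ) := by exact_mod_cast hu
      refine Or.inr (Or.inr (Or.inr (Or.inr (Or.inr (Or.inr (Or.inr (Or.inr (Or.inr ?_))))))))
      rw [habs, abs_of_nonneg (by nlinarith)]
      nlinarith
    · have h1 : 3 * c ≤ u * c := by nlinarith
      have h2 : 0 ≤ v * b := mul_nonneg hv (by omega)
      refine Or.inr (Or.inr (Or.inr (Or.inr (Or.inr (Or.inr (Or.inr (Or.inr (Or.inl ?_))))))))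
      omega


/-- The defining set of `psi2Fn`. -/
def SS (α t : ℝ) : Set ℝ :=
  {x : ℝ | ∃ p q : ℤ, 1 ≤ q ∧ (q : ℝ) ≤ t ∧
    (∀ n : ℕ, ¬(p = cfNum α n ∧ q = cfDen α n)) ∧ x = |(q : ℝ) * α - (p : ℝ)|}

private lemma psi2Fn_eq (α t : ℝ) : psi2Fn α t = sInf (SS α t) := rfl

private lemma SS_nonneg {α t x : ℝ} (hx : x ∈ SS α t) : 0 ≤ x := by
  obtain ⟨p, q, _, _, _, rfl⟩ := hx; exact abs_nonneg _

private lemma psi2_eq_of_min {α t c : ℝ} (hc : c ∈ SS α t) (hlb : ∀ x ∈ SS α t, c ≤ x) :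
    psi2Fn α t = c := by
  rw [psi2Fn_eq]
  exact le_antisymm (csInf_le ⟨0, fun x hx => SS_nonneg hx⟩ hc) (le_csInf ⟨c, hc⟩ hlb)

private lemma psi2_ge {α t c : ℝ} (hne : (SS α t).Nonempty) (hlb : ∀ x ∈ SS α t, c ≤ x) :
    c ≤ psi2Fn α t := by
  rw [psi2Fn_eq]; exact le_csInf hne hlb

private lemma contAt_of_const {f : ℝ → ℝ} {z C : ℝ}
    (h : ∀ t : ℝ, z - 1 < t → t < z + 1 → f t = C) : ContinuousAt f z := by
  have hev : f =ᶠ[nhds z] fun _ => C := by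
    filter_upwards [Ioo_mem_nhds (by linarith : z - 1 < z) (by linarith : z < z + 1)] with t ht
    exact h t ht.1 ht.2
  exact (continuousAt_congr hev).mpr continuousAt_const

private lemma not_contAt {f : ℝ → ℝ} {z C C' : ℝ}
    (hleft : ∀ t : ℝ, z - 1 < t → t < z → C' ≤ f t) (hval : f z = C) (hCC : C < C') :
    ¬ ContinuousAt f z := by
  intro hcont
  have h2 : Filter.Tendsto f (nhdsWithin z (Set.Iio z)) (nhds C) :=
    hval ▸ hcont.tendsto.mono_left nhdsWithin_le_nhds
  have h3 : C' ≤ C := by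
    refine ge_of_tendsto h2 ?_
    filter_upwards [Ioo_mem_nhdsLT_of_mem
      (⟨by linarith, le_refl z⟩ : z ∈ Set.Ioc (z - 1) z)] with t ht
    exact hleft t ht.1 ht.2
  linarith

end Stmt14Aux

set_option maxHeartbeats 2000000 in
/-- Let `α ∈ (0,1)` be irrational, `n ≥ 3`, `aₙ ≥ 2` and
`a_{n+1} = a_{n+2} = 1`. Then `qₙ − q_{n-1}`, `2q_{n-1} + qₙ`, `2qₙ`, `2q_{n+1}`
are four successive elements of `𝔔(α)`. -/
theorem stmt14 (α : ℝ) (hα : Irrational α) (h0 : 0 < α) (h1 : α < 1)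
    (n : ℕ) (hn : 3 ≤ n) (ha : 2 ≤ cfA α n)
    (ha' : cfA α (n + 1) = 1) (ha'' : cfA α (n + 2) = 1) :
    SuccessiveIn (QSet α)
      [cfDen α n - cfDen α (n - 1), 2 * cfDen α (n - 1) + cfDen α n,
        2 * cfDen α n, 2 * cfDen α (n + 1)] := by
  obtain ⟨m, rfl⟩ : ∃ m, n = m + 3 := ⟨n - 3, by omega⟩
  have e1 : m + 3 - 1 = m + 2 := by omega
  have e2 : m + 3 + 1 = m + 4 := by omega
  have e3 : m + 3 + 2 = m + 5 := by omega
  rw [e1, e2] at *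
  rw [e3] at ha''
  -- ha : 2 ≤ cfA α (m+3), ha' : cfA α (m+4) = 1, ha'' : cfA α (m+5) = 1
  set b := cfDen α (m + 2) with hbdef
  set c := cfDen α (m + 3) with hcdef
  set pb := cfNum α (m + 2) with hpbdef
  set pc := cfNum α (m + 3) with hpcdef
  set x := cfXi α (m + 3) with hxdef
  set y := cfXi α (m + 2) with hydef
  set z := cfXi α (m + 4) with hzdef
  -- integer facts
  have hb1 : 1 ≤ b := by rw [hbdef]; exact cfDen_pos hα _
  have hmid : 1 ≤ cfDen α (m + 1) := cfDen_pos hα _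
  have hc2b : 2 * b + 1 ≤ c := by
    have h1 : c = cfA α (m + 3) * b + cfDen α (m + 1) := by rw [hbdef, hcdef]; rfl
    nlinarith [ha]
  have hden4 : cfDen α (m + 4) = c + b := by
    have h1 : cfDen α (m + 4) = cfA α (m + 4) * c + b := by rw [hbdef, hcdef]; rfl
    rw [h1, ha']; ring
  have hden5 : cfDen α (m + 5) = 2 * c + b := by
    have h1 : cfDen α (m + 5) = cfA α (m + 5) * cfDen α (m + 4) + c := by rw [hcdef]; rfl
    rw [h1, ha'', hden4]; ring
  have hnum4 : cfNum α (m + 4) = pc + pb := by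
    have h1 : cfNum α (m + 4) = cfA α (m + 4) * pc + pb := by rw [hpbdef, hpcdef]; rfl
    rw [h1, ha']; ring
  have hnum5 : cfNum α (m + 5) = 2 * pc + pb := by
    have h1 : cfNum α (m + 5) = cfA α (m + 5) * cfNum α (m + 4) + pc := by rw [hpcdef]; rfl
    rw [h1, ha'', hnum4]; ring
  have hden6 : 3 * c + 2 * b ≤ cfDen α (m + 6) := by
    have h1 : cfDen α (m + 6) = cfA α (m + 6) * cfDen α (m + 5) + cfDen α (m + 4) := rfl
    have h2 : 1 ≤ cfA α (m + 6) := by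
      have := cfA_one_le hα (m + 5); simpa using this
    rw [h1, hden4, hden5]
    nlinarith
  rw [hden4]
  -- xi facts
  have hxE : x = Ek α (m + 4) := by rw [hxdef]; exact cfXi_eq hα _
  have hyE : y = Ek α (m + 3) := by rw [hydef]; exact cfXi_eq hα _
  have hzE : z = Ek α (m + 5) := by rw [hzdef]; exact cfXi_eq hα _
  have hz0 : 0 < z := by rw [hzE]; exact Ek_pos hα _
  have hyxz : y = x + z := by
    have h := Ek_rec (α := α) (m + 3)
    simp only [show m + 3 + 1 = m + 4 from by omega, show m + 3 + 2 = m + 5 from by omega] at h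
    rw [ha'] at h
    rw [hxE, hyE, hzE]
    push_cast at h
    linarith
  have hrec5 : x = z + Ek α (m + 6) := by
    have h := Ek_rec (α := α) (m + 4)
    simp only [show m + 4 + 1 = m + 5 from by omega, show m + 4 + 2 = m + 6 from by omega] at h
    rw [ha''] at h
    rw [hxE, hzE]
    push_cast at h
    linarith
  have hzx : z < x := by
    have := Ek_pos hα (m + 6); linarith [hrec5]
  have hx2z : x < 2 * z := by
    have h := Ek_lt hα (m + 5)
    simp only [show m + 5 + 1 = m + 6 from by omega] at h
    rw [← hzE] at h
    linarith [hrec5]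
  have hx0 : 0 < x := lt_trans hz0 hzx
  have hy0 : 0 < y := by linarith [hyxz]
  -- sign facts
  set e : ℝ := (-1) ^ (m + 3) with hedef
  have he : e = 1 ∨ e = -1 := by
    rcases Nat.even_or_odd (m + 3) with h | h
    · left; rw [hedef]; exact h.neg_one_pow
    · right; rw [hedef]; exact h.neg_one_pow
  have hdc : (c : ℝ) * α - (pc : ℝ) = e * x := by
    rw [hcdef, hpcdef, hxdef, hedef]; exact dDen_eq hα (m + 3)
  have hdb : (b : ℝ) * α - (pb : ℝ) = -(e * y) := by
    have h := dDen_eq hα (m + 2)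
    rw [← hbdef, ← hpbdef, ← hydef] at h
    have hpow : ((-1 : ℝ)) ^ (m + 2) = -e := by
      rw [hedef, show m + 3 = m + 2 + 1 from rfl, pow_succ]; ring
    rw [h, hpow]; ring
  have hdet : pc * b - pb * c = 1 ∨ pc * b - pb * c = -1 := by
    have h := cfDet (α := α) (m + 3)
    simp only [show m + 3 + 1 = m + 4 from by omega] at h
    have hh : pc * b - pb * c = (-1 : ℤ) ^ (m + 4) := h
    rcases Nat.even_or_odd (m + 4) with hp | hp
    · left; rw [hh, hp.neg_one_pow]
    · right; rw [hh, hp.neg_one_pow]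
  -- cast facts
  have hbR : (1 : ℝ) ≤ (b : ℝ) := by exact_mod_cast hb1
  have hcR : 2 * (b : ℝ) + 1 ≤ (c : ℝ) := by exact_mod_cast hc2b
  -- non-convergence of the four special denominators
  have hdenlow : ∀ j, j ≤ m + 2 → cfDen α j ≤ b := fun j hj => cfDen_mono hα hj
  have hdenhigh : ∀ j, m + 3 ≤ j → c ≤ cfDen α j := fun j hj => cfDen_mono hα hj
  have hdenlow4 : ∀ j, j ≤ m + 4 → cfDen α j ≤ c + b := fun j hj =>
    hden4 ▸ cfDen_mono hα hj
  have hdenhigh5 : ∀ j, m + 5 ≤ j → 2 * c + b ≤ cfDen α j := fun j hj =>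
    hden5 ▸ cfDen_mono hα hj
  have hdenlow5 : ∀ j, j ≤ m + 5 → cfDen α j ≤ 2 * c + b := fun j hj =>
    hden5 ▸ cfDen_mono hα hj
  have hdenhigh6 : ∀ j, m + 6 ≤ j → 3 * c + 2 * b ≤ cfDen α j := fun j hj =>
    le_trans hden6 (cfDen_mono hα hj)
  have hncA : ∀ j : ℕ, cfDen α j ≠ c - b := by
    intro j
    rcases le_or_gt j (m + 2) with hj | hj
    · have := hdenlow j hj; omega
    · have := hdenhigh j (by omega); omega
  have hncB : ∀ j : ℕ, cfDen α j ≠ c + 2 * b := by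
    intro j
    rcases le_or_gt j (m + 4) with hj | hj
    · have := hdenlow4 j hj; omega
    · have := hdenhigh5 j (by omega); omega
  have hncC : ∀ j : ℕ, cfDen α j ≠ 2 * c := by
    intro j
    rcases le_or_gt j (m + 4) with hj | hj
    · have := hdenlow4 j hj; omega
    · have := hdenhigh5 j (by omega); omega
  have hncD : ∀ j : ℕ, cfDen α j ≠ 2 * c + 2 * b := by
    intro j
    rcases le_or_gt j (m + 5) with hj | hj
    · have := hdenlow5 j hj; omega
    · have := hdenhigh6 j (by omega); omega
  -- abs helper
  have habsE : ∀ w : ℝ, |e * w| = |w| := by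
    intro w
    rcases he with h' | h'
    · rw [h', one_mul]
    · rw [h', neg_one_mul, abs_neg]
  -- membership elements
  have hmemA : ∀ t : ℝ, ((c : ℝ) - b) ≤ t → x + y ∈ SS α t := by
    intro t ht
    refine ⟨pc - pb, c - b, by omega, by push_cast; linarith, ?_, ?_⟩
    · rintro j ⟨-, h2⟩; exact hncA j h2.symm
    · have hval : ((c - b : ℤ) : ℝ) * α - ((pc - pb : ℤ) : ℝ) = e * (x + y) := by
        push_cast; linear_combination hdc - hdb
      rw [hval, habsE, abs_of_nonneg (by linarith)]
  have hmemB : ∀ t : ℝ, ((c : ℝ) + 2 * b) ≤ t → 2 * y - x ∈ SS α t := by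
    intro t ht
    refine ⟨pc + 2 * pb, c + 2 * b, by omega, by push_cast; linarith, ?_, ?_⟩
    · rintro j ⟨-, h2⟩; exact hncB j h2.symm
    · have hval : ((c + 2 * b : ℤ) : ℝ) * α - ((pc + 2 * pb : ℤ) : ℝ) = e * (x - 2 * y) := by
        push_cast; linear_combination hdc + 2 * hdb
      rw [hval, habsE, abs_of_nonpos (by linarith)]
      ring
  have hmemC : ∀ t : ℝ, 2 * (c : ℝ) ≤ t → 2 * x ∈ SS α t := by
    intro t ht
    refine ⟨2 * pc, 2 * c, by omega, by push_cast; linarith, ?_, ?_⟩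
    · rintro j ⟨-, h2⟩; exact hncC j h2.symm
    · have hval : ((2 * c : ℤ) : ℝ) * α - ((2 * pc : ℤ) : ℝ) = e * (2 * x) := by
        push_cast; linear_combination 2 * hdc
      rw [hval, habsE, abs_of_nonneg (by linarith)]
  have hmemD : ∀ t : ℝ, 2 * (c : ℝ) + 2 * b ≤ t → 2 * z ∈ SS α t := by
    intro t ht
    refine ⟨2 * pc + 2 * pb, 2 * c + 2 * b, by omega, by push_cast; linarith, ?_, ?_⟩
    · rintro j ⟨-, h2⟩; exact hncD j h2.symm
    · have hval : ((2 * c + 2 * b : ℤ) : ℝ) * α - ((2 * pc + 2 * pb : ℤ) : ℝ)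
          = e * (2 * x - 2 * y) := by
        push_cast; linear_combination 2 * hdc + 2 * hdb
      rw [hval, habsE, abs_of_nonpos (by linarith), hyxz]
      ring
  -- a small non-convergent element for nonemptiness
  have hfl0 : ⌊α⌋ = 0 := Int.floor_eq_zero_iff.mpr ⟨h0.le, h1⟩
  have hnum0 : cfNum α 0 = 0 := by
    show cfP α 1 = 0
    rw [show cfP α 1 = ⌊α⌋ from rfl, hfl0]
  have hnum1 : cfNum α 1 = 1 := by
    show cfP α 2 = 1
    rw [show cfP α 2 = cfA α 1 * cfP α 1 + cfP α 0 from rfl,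
      show cfP α 1 = ⌊α⌋ from rfl, hfl0, show cfP α 0 = 1 from rfl]
    ring
  have hden2up : ∀ j, 2 ≤ j → 2 ≤ cfDen α j := by
    intro j hj
    have h1 : 2 ≤ cfDen α 2 := by
      have h2 : cfDen α 2 = cfA α 2 * cfQ α 2 + cfQ α 1 := rfl
      have h3 : 1 ≤ cfA α 2 := by have := cfA_one_le hα 1; simpa using this
      have h4 : 1 ≤ cfQ α 2 := (cfQ_pos hα 1).2
      have h5 : cfQ α 1 = 1 := rfl
      rw [h2, h5]; nlinarith
    exact le_trans h1 (cfDen_mono hα hj)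
  have hmem1 : ∀ t : ℝ, 1 ≤ t → |α - 2| ∈ SS α t := by
    intro t ht
    refine ⟨2, 1, le_refl 1, by exact_mod_cast ht, ?_, by push_cast; norm_num⟩
    rintro j ⟨h1', h2'⟩
    rcases j with _ | j
    · rw [hnum0] at h1'; exact absurd h1' (by norm_num)
    rcases j with _ | j
    · rw [hnum1] at h1'; exact absurd h1' (by norm_num)
    · have := hden2up (j + 1 + 1) (by omega); omega
  -- key classification for elements of SS
  have hkey : ∀ t : ℝ, ∀ s ∈ SS α t,
      (s = x + y ∧ ((c : ℝ) - b) ≤ t) ∨ (s = 2 * y - x ∧ ((c : ℝ) + 2 * b) ≤ t) ∨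
      (s = 2 * x ∧ 2 * (c : ℝ) ≤ t) ∨ (s = 2 * z ∧ 2 * (c : ℝ) + 2 * b ≤ t) ∨
      (2 * (c : ℝ) + 2 * b + 1 ≤ t) ∨ (x + y + z ≤ s) := by
    intro t s hs
    obtain ⟨p, q, hq1, hqt, hpq, rfl⟩ := hs
    rcases abstract_key α b c pb pc x y z e hb1 hc2b hz0 hzx hx2z hyxz he hdc hdb hdet p q hq1 with
      h | h | h | h | h | h | h | h | h | h
    · exact absurd ⟨h.1, h.2⟩ (hpq (m + 2))
    · exact absurd ⟨h.1, h.2⟩ (hpq (m + 3))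
    · exact absurd ⟨by rw [h.1, hnum4], by rw [h.2, hden4]⟩ (hpq (m + 4))
    · exact absurd ⟨by rw [h.1, hnum5], by rw [h.2, hden5]⟩ (hpq (m + 5))
    · left
      refine ⟨h.2.2, ?_⟩
      rw [h.2.1] at hqt; push_cast at hqt; linarith
    · right; left
      refine ⟨h.2.2, ?_⟩
      rw [h.2.1] at hqt; push_cast at hqt; linarith
    · right; right; left
      refine ⟨h.2.2, ?_⟩
      rw [h.2.1] at hqt; push_cast at hqt; linarith
    · right; right; right; left
      refine ⟨h.2.2, ?_⟩
      rw [h.2.1] at hqt; push_cast at hqt; linarith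
    · right; right; right; right; left
      have : ((2 * c + 2 * b + 1 : ℤ) : ℝ) ≤ (q : ℝ) := by exact_mod_cast h
      push_cast at this; linarith
    · right; right; right; right; right; exact h
  -- interval evaluations of psi2Fn
  have evalAB : ∀ t : ℝ, ((c : ℝ) - b) ≤ t → t < (c : ℝ) + 2 * b → psi2Fn α t = x + y := by
    intro t h1' h2'
    apply psi2_eq_of_min (hmemA t h1')
    intro s hs
    rcases hkey t s hs with ⟨rfl, -⟩ | ⟨-, h⟩ | ⟨-, h⟩ | ⟨-, h⟩ | h | h
    · exact le_refl _
    · linarith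
    · linarith
    · linarith
    · linarith
    · linarith
  have evalBC : ∀ t : ℝ, ((c : ℝ) + 2 * b) ≤ t → t < 2 * (c : ℝ) → psi2Fn α t = 2 * y - x := by
    intro t h1' h2'
    apply psi2_eq_of_min (hmemB t h1')
    intro s hs
    rcases hkey t s hs with ⟨rfl, -⟩ | ⟨rfl, -⟩ | ⟨-, h⟩ | ⟨-, h⟩ | h | h
    · linarith
    · exact le_refl _
    · linarith
    · linarith
    · linarith
    · linarith
  have evalCD : ∀ t : ℝ, 2 * (c : ℝ) ≤ t → t < 2 * (c : ℝ) + 2 * b → psi2Fn α t = 2 * x := by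
    intro t h1' h2'
    apply psi2_eq_of_min (hmemC t h1')
    intro s hs
    rcases hkey t s hs with ⟨rfl, -⟩ | ⟨rfl, -⟩ | ⟨rfl, -⟩ | ⟨-, h⟩ | h | h
    · linarith
    · linarith
    · exact le_refl _
    · linarith
    · linarith
    · linarith
  have evalD : ∀ t : ℝ, 2 * (c : ℝ) + 2 * b ≤ t → t < 2 * (c : ℝ) + 2 * b + 1 →
      psi2Fn α t = 2 * z := by
    intro t h1' h2'
    apply psi2_eq_of_min (hmemD t h1')
    intro s hs
    rcases hkey t s hs with ⟨rfl, -⟩ | ⟨rfl, -⟩ | ⟨rfl, -⟩ | ⟨rfl, -⟩ | h | h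
    · linarith
    · linarith
    · linarith
    · exact le_refl _
    · linarith
    · linarith
  have lbA : ∀ t : ℝ, 1 ≤ t → t < (c : ℝ) - b → x + y + z ≤ psi2Fn α t := by
    intro t h1' h2'
    apply psi2_ge ⟨|α - 2|, hmem1 t h1'⟩
    intro s hs
    rcases hkey t s hs with ⟨rfl, h⟩ | ⟨rfl, h⟩ | ⟨rfl, h⟩ | ⟨rfl, h⟩ | h | h
    · linarith
    · linarith
    · linarith
    · linarith
    · linarith
    · exact h
  -- discontinuity at the four points
  have hdiscA : ¬ ContinuousAt (psi2Fn α) (((c - b : ℤ)) : ℝ) := by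
    have hcast : ((c - b : ℤ) : ℝ) = (c : ℝ) - b := by push_cast; ring
    rw [hcast]
    refine not_contAt (C := x + y) (C' := x + y + z) ?_ ?_ (by linarith)
    · intro t ht1 ht2
      exact lbA t (by linarith) ht2
    · exact evalAB _ (le_refl _) (by linarith)
  have hdiscB : ¬ ContinuousAt (psi2Fn α) (((2 * b + c : ℤ)) : ℝ) := by
    have hcast : ((2 * b + c : ℤ) : ℝ) = (c : ℝ) + 2 * b := by push_cast; ring
    rw [hcast]
    refine not_contAt (C := 2 * y - x) (C' := x + y) ?_ ?_ (by linarith)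
    · intro t ht1 ht2
      exact (evalAB t (by linarith) ht2).ge.trans (le_refl _)
    · exact evalBC _ (le_refl _) (by linarith)
  have hdiscC : ¬ ContinuousAt (psi2Fn α) (((2 * c : ℤ)) : ℝ) := by
    have hcast : ((2 * c : ℤ) : ℝ) = 2 * (c : ℝ) := by push_cast; ring
    rw [hcast]
    refine not_contAt (C := 2 * x) (C' := 2 * y - x) ?_ ?_ (by linarith)
    · intro t ht1 ht2
      exact (evalBC t (by linarith) ht2).ge.trans (le_refl _)
    · exact evalCD _ (le_refl _) (by linarith)
  have hdiscD : ¬ ContinuousAt (psi2Fn α) (((2 * (c + b) : ℤ)) : ℝ) := by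
    have hcast : ((2 * (c + b) : ℤ) : ℝ) = 2 * (c : ℝ) + 2 * b := by push_cast; ring
    rw [hcast]
    refine not_contAt (C := 2 * z) (C' := 2 * x) ?_ ?_ (by linarith)
    · intro t ht1 ht2
      exact (evalCD t (by linarith) ht2).ge.trans (le_refl _)
    · exact evalD _ (le_refl _) (by linarith)
  -- continuity strictly between the four points
  have hcontAB : ∀ w : ℤ, c - b < w → w < 2 * b + c → ContinuousAt (psi2Fn α) (w : ℝ) := by
    intro w hw1 hw2
    have hw1R : (c : ℝ) - b + 1 ≤ (w : ℝ) := by exact_mod_cast (by omega : c - b + 1 ≤ w)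
    have hw2R : (w : ℝ) + 1 ≤ (c : ℝ) + 2 * b := by exact_mod_cast (by omega : w + 1 ≤ c + 2 * b)
    refine contAt_of_const (C := x + y) ?_
    intro t ht1 ht2
    exact evalAB t (by linarith) (by linarith)
  have hcontBC : ∀ w : ℤ, 2 * b + c < w → w < 2 * c → ContinuousAt (psi2Fn α) (w : ℝ) := by
    intro w hw1 hw2
    have hw1R : (c : ℝ) + 2 * b + 1 ≤ (w : ℝ) := by exact_mod_cast (by omega : c + 2 * b + 1 ≤ w)
    have hw2R : (w : ℝ) + 1 ≤ 2 * (c : ℝ) := by exact_mod_cast (by omega : w + 1 ≤ 2 * c)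
    refine contAt_of_const (C := 2 * y - x) ?_
    intro t ht1 ht2
    exact evalBC t (by linarith) (by linarith)
  have hcontCD : ∀ w : ℤ, 2 * c < w → w < 2 * (c + b) → ContinuousAt (psi2Fn α) (w : ℝ) := by
    intro w hw1 hw2
    have hw1R : 2 * (c : ℝ) + 1 ≤ (w : ℝ) := by exact_mod_cast (by omega : 2 * c + 1 ≤ w)
    have hw2R : (w : ℝ) + 1 ≤ 2 * (c : ℝ) + 2 * b := by
      exact_mod_cast (by omega : w + 1 ≤ 2 * c + 2 * b)
    refine contAt_of_const (C := 2 * x) ?_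
    intro t ht1 ht2
    exact evalCD t (by linarith) (by linarith)
  -- final assembly
  constructor
  · intro w hw
    simp only [List.mem_cons, List.not_mem_nil, or_false] at hw
    rcases hw with rfl | rfl | rfl | rfl
    · exact ⟨by omega, hdiscA⟩
    · exact ⟨by omega, hdiscB⟩
    · exact ⟨by omega, hdiscC⟩
    · exact ⟨by omega, hdiscD⟩
  · rw [List.Chain', List.isChain_cons_cons, List.isChain_cons_cons, List.isChain_cons_cons]
    refine ⟨⟨by omega, ?_⟩, ⟨by omega, ?_⟩, ⟨by omega, ?_⟩, List.isChain_singleton _⟩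
    · rintro w hw ⟨hw1, hw2⟩
      exact hw.2 (hcontAB w hw1 hw2)
    · rintro w hw ⟨hw1, hw2⟩
      exact hw.2 (hcontBC w hw1 hw2)
    · rintro w hw ⟨hw1, hw2⟩
      exact hw.2 (hcontCD w hw1 hw2)
end

section
/- Let n ≥ 3 and suppose a_n = a_{n+1} = a_{n+2} = 1. Then 2q_n and 2q_{n+1} are two successive elements of 𝔔(α). -/
open Filter Real Set

namespace Stmt15Aux

lemma gauss_irr (α : ℝ) (hα : Irrational α) : ∀ m, Irrational (gaussIter α m) := by
  intro m
  induction m with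
  | zero => exact hα
  | succ k ih =>
    show Irrational (Int.fract (gaussIter α k))⁻¹
    exact (by rw [Int.fract]; exact ih.sub_intCast _ : Irrational (Int.fract (gaussIter α k))).inv

lemma fract_pos_of_irr {x : ℝ} (hx : Irrational x) : 0 < Int.fract x := by
  rcases lt_or_eq_of_le (Int.fract_nonneg x) with h | h
  · exact h
  · exfalso
    have : Irrational (Int.fract x) := by rw [Int.fract]; exact hx.sub_intCast _
    exact this.ne_zero h.symm

lemma theta_pos (α : ℝ) (hα : Irrational α) (m : ℕ) : 0 < Int.fract (gaussIter α m) :=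
  fract_pos_of_irr (gauss_irr α hα m)

lemma theta_lt_one (α : ℝ) (m : ℕ) : Int.fract (gaussIter α m) < 1 := Int.fract_lt_one _

lemma gauss_gt_one (α : ℝ) (hα : Irrational α) (m : ℕ) : 1 < gaussIter α (m + 1) := by
  show 1 < (Int.fract (gaussIter α m))⁻¹
  rw [lt_inv_comm₀ one_pos (theta_pos α hα m)]
  simpa using theta_lt_one α m

lemma cfA_pos (α : ℝ) (hα : Irrational α) (m : ℕ) : 1 ≤ cfA α (m + 1) := by
  have := gauss_gt_one α hα m
  exact Int.le_floor.2 (by exact_mod_cast this.le)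

/-- signed error at shifted index -/
noncomputable def dd (α : ℝ) (m : ℕ) : ℝ := (cfQ α m : ℝ) * α - (cfP α m : ℝ)

lemma dd_zero (α : ℝ) : dd α 0 = -1 := by simp [dd, cfQ, cfP]

lemma theta_eq (α : ℝ) (m : ℕ) :
    Int.fract (gaussIter α (m + 1)) = (Int.fract (gaussIter α m))⁻¹ - (cfA α (m + 1) : ℝ) := by
  rw [Int.fract]; rfl

lemma dd_rec (α : ℝ) (hα : Irrational α) (m : ℕ) :
    dd α (m + 1) = -(Int.fract (gaussIter α m)) * dd α m := by
  induction m with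
  | zero =>
    show (cfQ α 1 : ℝ) * α - (cfP α 1 : ℝ) = -(Int.fract (gaussIter α 0)) * dd α 0
    rw [dd_zero]
    show ((1 : ℤ) : ℝ) * α - ((⌊α⌋ : ℤ) : ℝ) = -(Int.fract α) * (-1)
    rw [Int.fract]; push_cast; ring
  | succ k ih =>
    have hθ : Int.fract (gaussIter α k) ≠ 0 := (theta_pos α hα k).ne'
    have hdd2 : dd α (k + 2) = (cfA α (k + 1) : ℝ) * dd α (k + 1) + dd α k := by
      show (cfQ α (k + 2) : ℝ) * α - (cfP α (k + 2) : ℝ) = _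
      rw [show cfQ α (k+2) = cfA α (k+1) * cfQ α (k+1) + cfQ α k from rfl,
          show cfP α (k+2) = cfA α (k+1) * cfP α (k+1) + cfP α k from rfl]
      unfold dd; push_cast; ring
    rw [hdd2, theta_eq, ih]
    field_simp
    ring

/-- `ε m = |dd m|` -/
noncomputable def ee (α : ℝ) (m : ℕ) : ℝ := |dd α m|

lemma dd_sign (α : ℝ) (hα : Irrational α) (m : ℕ) : 0 < (-1 : ℝ) ^ (m + 1) * dd α m := by
  induction m with
  | zero => rw [dd_zero]; norm_num
  | succ k ih =>
    rw [dd_rec α hα k, pow_succ]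
    have hθ := theta_pos α hα k
    nlinarith [ih]

lemma dd_ne (α : ℝ) (hα : Irrational α) (m : ℕ) : dd α m ≠ 0 := by
  intro h
  have := dd_sign α hα m
  rw [h, mul_zero] at this
  exact lt_irrefl _ this

lemma ee_pos (α : ℝ) (hα : Irrational α) (m : ℕ) : 0 < ee α m :=
  abs_pos.2 (dd_ne α hα m)

lemma dd_eq (α : ℝ) (hα : Irrational α) (m : ℕ) : dd α m = (-1 : ℝ) ^ (m + 1) * ee α m := by
  have hs := dd_sign α hα m
  rcases Nat.even_or_odd (m + 1) with h | h
  · rw [h.neg_one_pow] at hs ⊢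
    rw [one_mul] at hs ⊢
    rw [ee, abs_of_pos hs]
  · rw [h.neg_one_pow] at hs ⊢
    have : dd α m < 0 := by linarith
    rw [ee, abs_of_neg this]; ring

lemma ee_decr (α : ℝ) (hα : Irrational α) (m : ℕ) : ee α (m + 1) < ee α m := by
  have h := dd_rec α hα m
  have h1 : ee α (m + 1) = Int.fract (gaussIter α m) * ee α m := by
    rw [ee, h, abs_mul, abs_neg, abs_of_pos (theta_pos α hα m), ee]
  rw [h1]
  nlinarith [theta_pos α hα m, theta_lt_one α m, ee_pos α hα m]

lemma ee_rec (α : ℝ) (hα : Irrational α) (m : ℕ) :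
    ee α m = (cfA α (m + 1) : ℝ) * ee α (m + 1) + ee α (m + 2) := by
  have hdd2 : dd α (m + 2) = (cfA α (m + 1) : ℝ) * dd α (m + 1) + dd α m := by
    show (cfQ α (m + 2) : ℝ) * α - (cfP α (m + 2) : ℝ) = _
    rw [show cfQ α (m+2) = cfA α (m+1) * cfQ α (m+1) + cfQ α m from rfl,
        show cfP α (m+2) = cfA α (m+1) * cfP α (m+1) + cfP α m from rfl]
    unfold dd; push_cast; ring
  have e0 := dd_eq α hα m
  have e1 := dd_eq α hα (m + 1)
  have e2 := dd_eq α hα (m + 2)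
  rw [e0, e1, e2] at hdd2
  have hpow : (-1 : ℝ) ^ (m + 1 + 1 + 1) = (-1 : ℝ) ^ (m + 1) := by
    rw [pow_succ, pow_succ]; ring
  have hpow2 : (-1 : ℝ) ^ (m + 1 + 1) = -(-1 : ℝ) ^ (m + 1) := by rw [pow_succ]; ring
  rw [hpow, hpow2] at hdd2
  rcases Nat.even_or_odd (m+1) with h | h
  · rw [h.neg_one_pow] at hdd2; linarith
  · rw [h.neg_one_pow] at hdd2; linarith

lemma Q_nonneg (α : ℝ) (hα : Irrational α) : ∀ m, 0 ≤ cfQ α m := by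
  intro m
  induction m using Nat.strong_induction_on with
  | _ m ih =>
    match m with
    | 0 => simp [cfQ]
    | 1 => simp [cfQ]
    | (k + 2) =>
      have h1 := ih (k + 1) (by omega)
      have h2 := ih k (by omega)
      have ha := cfA_pos α hα k
      show 0 ≤ cfA α (k + 1) * cfQ α (k + 1) + cfQ α k
      nlinarith [cfA_pos α hα (k + 1)]

lemma Q_pos (α : ℝ) (hα : Irrational α) : ∀ m, 1 ≤ m → 1 ≤ cfQ α m := by
  intro m
  induction m using Nat.strong_induction_on with
  | _ m ih =>
    match m with
    | 0 => omega
    | 1 => intro _; simp [cfQ]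
    | (k + 2) =>
      intro _
      have h1 := ih (k + 1) (by omega) (by omega)
      have h2 := Q_nonneg α hα k
      have := mul_le_mul (cfA_pos α hα k) h1 one_pos.le
        (le_trans one_pos.le (cfA_pos α hα k))
      show 1 ≤ cfA α (k + 1) * cfQ α (k + 1) + cfQ α k
      omega

lemma Q_mono (α : ℝ) (hα : Irrational α) (m : ℕ) (hm : 1 ≤ m) : cfQ α m ≤ cfQ α (m + 1) := by
  match m, hm with
  | (k + 1), _ =>
    have h1 := le_mul_of_one_le_left (le_trans one_pos.le (Q_pos α hα (k + 1) (by omega)))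
      (cfA_pos α hα k)
    have h2 := Q_nonneg α hα k
    show cfQ α (k + 1) ≤ cfA α (k + 1) * cfQ α (k + 1) + cfQ α k
    omega

lemma Q_strict (α : ℝ) (hα : Irrational α) (m : ℕ) (hm : 2 ≤ m) : cfQ α m < cfQ α (m + 1) := by
  match m, hm with
  | (k + 2), _ =>
    have h1 := le_mul_of_one_le_left (le_trans one_pos.le (Q_pos α hα (k + 2) (by omega)))
      (show (1:ℤ) ≤ cfA α (k + 2) from cfA_pos α hα (k + 1))
    have h2 := Q_pos α hα (k + 1) (by omega)
    show cfQ α (k + 2) < cfA α (k + 2) * cfQ α (k + 2) + cfQ α (k + 1)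
    omega

lemma Q_mono' (α : ℝ) (hα : Irrational α) (i j : ℕ) (hi : 1 ≤ i) (hij : i ≤ j) :
    cfQ α i ≤ cfQ α j := by
  induction j with
  | zero => omega
  | succ k ih =>
    rcases Nat.lt_or_ge i (k + 1) with h | h
    · exact le_trans (ih (by omega)) (Q_mono α hα k (by omega))
    · have : i = k + 1 := by omega
      rw [this]

lemma P_nonneg (α : ℝ) (hα : Irrational α) (h0 : 0 < α) : ∀ m, 0 ≤ cfP α m := by
  have hfl : ⌊α⌋ = 0 ∨ 0 ≤ ⌊α⌋ := Or.inr (Int.floor_nonneg.2 h0.le)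
  intro m
  induction m using Nat.strong_induction_on with
  | _ m ih =>
    match m with
    | 0 => simp [cfP]
    | 1 => show 0 ≤ ⌊α⌋; exact Int.floor_nonneg.2 h0.le
    | (k + 2) =>
      have h1 := ih (k + 1) (by omega)
      have h2 := ih k (by omega)
      have := mul_nonneg (le_trans one_pos.le (cfA_pos α hα k)) h1
      show 0 ≤ cfA α (k + 1) * cfP α (k + 1) + cfP α k
      omega

lemma det_eq (α : ℝ) : ∀ m, cfP α (m + 1) * cfQ α m - cfP α m * cfQ α (m + 1) = (-1) ^ (m + 1) := by
  intro m
  induction m with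
  | zero => simp [cfP, cfQ]
  | succ k ih =>
    have e1 : cfP α (k + 2) = cfA α (k + 1) * cfP α (k + 1) + cfP α k := rfl
    have e2 : cfQ α (k + 2) = cfA α (k + 1) * cfQ α (k + 1) + cfQ α k := rfl
    rw [e1, e2, pow_succ]
    nlinarith [ih]

lemma decomp (α : ℝ) (m : ℕ) (p q : ℤ) :
    ∃ x y : ℤ, p = x * cfP α m + y * cfP α (m + 1) ∧ q = x * cfQ α m + y * cfQ α (m + 1) := by
  have hd := det_eq α m
  have hd2 : ((-1) ^ (m + 1) : ℤ) * ((-1) ^ (m + 1) : ℤ) = 1 := by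
    rcases Nat.even_or_odd (m + 1) with h | h
    · rw [h.neg_one_pow]; ring
    · rw [h.neg_one_pow]; ring
  refine ⟨(-1) ^ (m + 1) * (q * cfP α (m + 1) - p * cfQ α (m + 1)),
          (-1) ^ (m + 1) * (p * cfQ α m - q * cfP α m), ?_, ?_⟩
  · linear_combination (-(-1 : ℤ) ^ (m + 1) * p) * hd + (-p) * hd2
  · linear_combination (-(-1 : ℤ) ^ (m + 1) * q) * hd + (-q) * hd2

lemma abs_comb (α : ℝ) (hα : Irrational α) (m : ℕ) (x y : ℤ) :
    |(x : ℝ) * dd α m + (y : ℝ) * dd α (m + 1)| = |(x : ℝ) * ee α m - (y : ℝ) * ee α (m + 1)| := by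
  rw [dd_eq α hα m, dd_eq α hα (m + 1)]
  have h : (x : ℝ) * ((-1) ^ (m + 1) * ee α m) + (y : ℝ) * ((-1) ^ (m + 1 + 1) * ee α (m + 1))
      = (-1) ^ (m + 1) * ((x : ℝ) * ee α m - (y : ℝ) * ee α (m + 1)) := by
    rw [pow_succ]; ring
  rw [h, abs_mul, abs_pow, abs_neg, abs_one, one_pow, one_mul]

lemma int_ge_one_of_mul {x Q : ℤ} (hQ : 1 ≤ Q) (h : 1 ≤ x * Q) : 1 ≤ x := by
  by_contra hx
  push_neg at hx
  have : x * Q ≤ 0 * Q := mul_le_mul_of_nonneg_right (by omega) (by omega)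
  omega

lemma L1 (α : ℝ) (hα : Irrational α) (h0 : 0 < α) (h1 : α < 1)
    (n : ℕ) (hn : 3 ≤ n) (ha : cfA α n = 1) (ha' : cfA α (n + 1) = 1)
    (p q : ℤ) (hq1 : 1 ≤ q) (hq2 : q ≤ 2 * cfQ α (n + 1) - 1)
    (hpq : ∀ k : ℕ, ¬(p = cfNum α k ∧ q = cfDen α k)) :
    2 * ee α (n + 1) + ee α (n + 2) ≤ |(q : ℝ) * α - (p : ℝ)| := by
  obtain ⟨x, y, hp, hq⟩ := decomp α (n + 1) p q
  rw [show n + 1 + 1 = n + 2 from rfl] at hp hq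
  have hval : (q : ℝ) * α - (p : ℝ) = (x : ℝ) * dd α (n + 1) + (y : ℝ) * dd α (n + 2) := by
    rw [hp, hq]; unfold dd; push_cast; ring
  rw [hval, abs_comb α hα (n + 1) x y]
  set ζ1 := ee α (n + 1) with hζ1
  set ζ2 := ee α (n + 2) with hζ2
  have hz1 : 0 < ζ1 := ee_pos α hα (n + 1)
  have hz2 : 0 < ζ2 := ee_pos α hα (n + 2)
  have hz21 : ζ2 < ζ1 := ee_decr α hα (n + 1)
  -- integer facts
  have hQrec2 : cfQ α (n + 2) = cfQ α (n + 1) + cfQ α n := by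
    show cfA α (n + 1) * cfQ α (n + 1) + cfQ α n = _
    rw [ha']; ring
  obtain ⟨j, hj⟩ : ∃ j, n = j + 1 := ⟨n - 1, by omega⟩
  have hQrec1 : cfQ α (n + 1) = cfQ α n + cfQ α (n - 1) := by
    subst hj
    show cfA α (j + 1) * cfQ α (j + 1) + cfQ α j = _
    rw [show cfA α (j + 1) = 1 from ha]
    simp
  have hQn : 1 ≤ cfQ α n := Q_pos α hα n (by omega)
  have hQn1 : 1 ≤ cfQ α (n - 1) := Q_pos α hα (n - 1) (by omega)
  have hmono : cfQ α (n - 1) ≤ cfQ α n := by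
    have := Q_mono α hα (n - 1) (by omega)
    rwa [show n - 1 + 1 = n by omega] at this
  have hQ1 : 1 ≤ cfQ α (n + 1) := Q_pos α hα (n + 1) (by omega)
  have hQ12 : cfQ α (n + 1) ≤ cfQ α (n + 2) := by omega
  rcases lt_trichotomy y 0 with hy | hy | hy
  · -- y ≤ -1 : then x ≥ 2 and value = xζ1 + |y|ζ2 ≥ 2ζ1 + ζ2
    have hy' : y ≤ -1 := by omega
    have hxy : 1 ≤ x + y := by
      refine int_ge_one_of_mul hQ1 ?_
      have h2 : (-y) * (cfQ α (n + 2) - cfQ α (n + 1)) ≥ 0 :=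
        mul_nonneg (by omega) (by omega)
      nlinarith [hq]
    have hx2 : 2 ≤ x := by omega
    have hb : 2 * ζ1 + ζ2 ≤ (x : ℝ) * ζ1 - (y : ℝ) * ζ2 := by
      have c1 : (2 : ℝ) ≤ (x : ℝ) := by exact_mod_cast hx2
      have c2 : (y : ℝ) ≤ -1 := by exact_mod_cast hy'
      nlinarith [mul_nonneg (by linarith : (0:ℝ) ≤ (x:ℝ) - 2) hz1.le,
        mul_nonneg (by linarith : (0:ℝ) ≤ -(y:ℝ) - 1) hz2.le]
    exact le_trans hb (le_abs_self _)
  · -- y = 0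
    subst hy
    rw [zero_mul, add_zero] at hq
    have hx1 : 1 ≤ x := int_ge_one_of_mul hQ1 (by omega)
    rcases eq_or_lt_of_le hx1 with hx | hx
    · exfalso
      exact hpq n ⟨by rw [hp, ← hx]; simp [cfNum], by rw [hq, ← hx]; simp [cfDen]⟩
    · exfalso
      have : 2 * cfQ α (n + 1) ≤ x * cfQ α (n + 1) :=
        mul_le_mul_of_nonneg_right (by omega) (by omega)
      omega
  · -- y ≥ 1
    have hy' : 1 ≤ y := hy
    have hyQ : cfQ α (n + 2) ≤ y * cfQ α (n + 2) :=
      le_mul_of_one_le_left (by omega) hy'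
    rcases lt_trichotomy x 0 with hx | hx | hx
    · -- x ≤ -1
      rcases eq_or_lt_of_le (show x ≤ -1 by omega) with hx1 | hx1
      · -- x = -1
        rcases eq_or_lt_of_le hy' with hy1 | hy1
        · -- y = 1 : convergent (n-1)
          exfalso
          rw [hx1, ← hy1] at hp hq
          have hPrec2 : cfP α (n + 2) = cfP α (n + 1) + cfP α n := by
            show cfA α (n + 1) * cfP α (n + 1) + cfP α n = _
            rw [ha']; ring
          refine hpq (n - 1) ⟨?_, ?_⟩
          · rw [show cfNum α (n - 1) = cfP α n by rw [cfNum, show n - 1 + 1 = n by omega]]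
            omega
          · rw [show cfDen α (n - 1) = cfQ α n by rw [cfDen, show n - 1 + 1 = n by omega]]
            omega
        · -- y ≥ 2 : q ≥ 2 Q(n+1), contradiction
          exfalso
          rw [hx1] at hq
          have h2 : 2 * cfQ α (n + 2) ≤ y * cfQ α (n + 2) :=
            mul_le_mul_of_nonneg_right (by omega) (by omega)
          omega
      · -- x ≤ -2 : value bound
        have hx2 : x ≤ -2 := by omega
        have hb : 2 * ζ1 + ζ2 ≤ -((x : ℝ) * ζ1 - (y : ℝ) * ζ2) := by
          have c1 : (x : ℝ) ≤ -2 := by exact_mod_cast hx2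
          have c2 : (1 : ℝ) ≤ (y : ℝ) := by exact_mod_cast hy'
          nlinarith [mul_nonneg (by linarith : (0:ℝ) ≤ -(x:ℝ) - 2) hz1.le,
            mul_nonneg (by linarith : (0:ℝ) ≤ (y:ℝ) - 1) hz2.le]
        exact le_trans hb (neg_le_abs _)
    · -- x = 0
      exfalso
      subst hx
      rw [zero_mul, zero_add] at hq
      rcases eq_or_lt_of_le hy' with hy1 | hy1
      · exact hpq (n + 1) ⟨by rw [hp, ← hy1]; simp [cfNum], by rw [hq, ← hy1]; simp [cfDen]⟩
      · have h2 : 2 * cfQ α (n + 2) ≤ y * cfQ α (n + 2) :=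
          mul_le_mul_of_nonneg_right (by omega) (by omega)
        omega
    · -- x ≥ 1 : q ≥ Q1 + Q2 ≥ 2Q1, contradiction
      exfalso
      have h2 : cfQ α (n + 1) ≤ x * cfQ α (n + 1) :=
        le_mul_of_one_le_left (by omega) hx
      omega

lemma L2 (α : ℝ) (hα : Irrational α) (h0 : 0 < α) (h1 : α < 1)
    (n : ℕ) (hn : 3 ≤ n) (ha : cfA α n = 1) (ha' : cfA α (n + 1) = 1) (ha'' : cfA α (n + 2) = 1)
    (p q : ℤ) (hq1 : 1 ≤ q) (hq2 : q ≤ 2 * cfQ α (n + 2) - 1)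
    (hpq : ∀ k : ℕ, ¬(p = cfNum α k ∧ q = cfDen α k)) :
    2 * ee α (n + 1) ≤ |(q : ℝ) * α - (p : ℝ)| := by
  obtain ⟨x, y, hp, hq⟩ := decomp α (n + 2) p q
  rw [show n + 2 + 1 = n + 3 from rfl] at hp hq
  have hval : (q : ℝ) * α - (p : ℝ) = (x : ℝ) * dd α (n + 2) + (y : ℝ) * dd α (n + 3) := by
    rw [hp, hq]; unfold dd; push_cast; ring
  rw [hval, show (((x : ℝ) * dd α (n + 2) + (y : ℝ) * dd α (n + 3))) =
      ((x : ℝ) * dd α (n + 2) + (y : ℝ) * dd α (n + 2 + 1)) from rfl,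
    abs_comb α hα (n + 2) x y]
  have hee : ee α (n + 1) = ee α (n + 2) + ee α (n + 3) := by
    have := ee_rec α hα (n + 1)
    rwa [show cfA α (n + 1 + 1) = 1 from ha'', Int.cast_one, one_mul,
      show n + 1 + 1 = n + 2 from rfl, show n + 1 + 2 = n + 3 from rfl] at this
  rw [show n + 2 + 1 = n + 3 from rfl, hee]
  set ζ1 := ee α (n + 2) with hζ1
  set ζ2 := ee α (n + 3) with hζ2
  have hz1 : 0 < ζ1 := ee_pos α hα (n + 2)
  have hz2 : 0 < ζ2 := ee_pos α hα (n + 3)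
  have hz21 : ζ2 < ζ1 := ee_decr α hα (n + 2)
  -- integer facts
  have hQrec3 : cfQ α (n + 3) = cfQ α (n + 2) + cfQ α (n + 1) := by
    show cfA α (n + 2) * cfQ α (n + 2) + cfQ α (n + 1) = _
    rw [ha'']; ring
  have hQrec2 : cfQ α (n + 2) = cfQ α (n + 1) + cfQ α n := by
    show cfA α (n + 1) * cfQ α (n + 1) + cfQ α n = _
    rw [ha']; ring
  have hQn : 1 ≤ cfQ α n := Q_pos α hα n (by omega)
  have hQn1 : 1 ≤ cfQ α (n + 1) := Q_pos α hα (n + 1) (by omega)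
  have hmono : cfQ α n ≤ cfQ α (n + 1) := Q_mono α hα n (by omega)
  have hQ1 : 1 ≤ cfQ α (n + 2) := Q_pos α hα (n + 2) (by omega)
  have hQ12 : cfQ α (n + 2) ≤ cfQ α (n + 3) := by omega
  have hPrec3 : cfP α (n + 3) = cfP α (n + 2) + cfP α (n + 1) := by
    show cfA α (n + 2) * cfP α (n + 2) + cfP α (n + 1) = _
    rw [ha'']; ring
  have hPrec2 : cfP α (n + 2) = cfP α (n + 1) + cfP α n := by
    show cfA α (n + 1) * cfP α (n + 1) + cfP α n = _
    rw [ha']; ring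
  rcases lt_trichotomy y 0 with hy | hy | hy
  · -- y ≤ -1 : x + y ≥ 1
    have hy' : y ≤ -1 := by omega
    have hxy : 1 ≤ x + y := by
      refine int_ge_one_of_mul hQ1 ?_
      have h2 : (-y) * (cfQ α (n + 3) - cfQ α (n + 2)) ≥ 0 :=
        mul_nonneg (by omega) (by omega)
      nlinarith [hq]
    by_cases hc : x = 2 ∧ y = -1
    · -- convergent (n-1)
      exfalso
      obtain ⟨hx2, hy2⟩ := hc
      rw [hx2, hy2] at hp hq
      refine hpq (n - 1) ⟨?_, ?_⟩
      · rw [show cfNum α (n - 1) = cfP α n by rw [cfNum, show n - 1 + 1 = n by omega]]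
        omega
      · rw [show cfDen α (n - 1) = cfQ α n by rw [cfDen, show n - 1 + 1 = n by omega]]
        omega
    · -- x ≥ 3
      have hx3 : 3 ≤ x := by
        rcases eq_or_lt_of_le hy' with h | h
        · rcases (show x = 2 ∨ 3 ≤ x ∨ x ≤ 1 by omega) with h2 | h2 | h2
          · exact absurd ⟨h2, h⟩ hc
          · exact h2
          · omega
        · omega
      have hb : 2 * (ζ1 + ζ2) ≤ (x : ℝ) * ζ1 - (y : ℝ) * ζ2 := by
        have c1 : (3 : ℝ) ≤ (x : ℝ) := by exact_mod_cast hx3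
        have c2 : (y : ℝ) ≤ -1 := by exact_mod_cast hy'
        nlinarith [mul_nonneg (by linarith : (0:ℝ) ≤ (x:ℝ) - 3) hz1.le,
          mul_nonneg (by linarith : (0:ℝ) ≤ -(y:ℝ) - 1) hz2.le]
      exact le_trans hb (le_abs_self _)
  · -- y = 0
    subst hy
    rw [zero_mul, add_zero] at hq
    have hx1 : 1 ≤ x := int_ge_one_of_mul hQ1 (by omega)
    rcases eq_or_lt_of_le hx1 with hx | hx
    · exact absurd ⟨by rw [hp, ← hx]; simp [cfNum], by rw [hq, ← hx]; simp [cfDen]⟩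
        (hpq (n + 1))
    · exfalso
      have : 2 * cfQ α (n + 2) ≤ x * cfQ α (n + 2) :=
        mul_le_mul_of_nonneg_right (by omega) (by omega)
      omega
  · -- y ≥ 1
    have hy' : 1 ≤ y := hy
    have hyQ : cfQ α (n + 3) ≤ y * cfQ α (n + 3) := le_mul_of_one_le_left (by omega) hy'
    rcases lt_trichotomy x 0 with hx | hx | hx
    · rcases eq_or_lt_of_le (show x ≤ -1 by omega) with hx1 | hx1
      · -- x = -1
        rcases eq_or_lt_of_le hy' with hy1 | hy1
        · -- y = 1 : convergent n
          exfalso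
          rw [hx1, ← hy1] at hp hq
          exact hpq n ⟨by rw [cfNum]; omega, by rw [cfDen]; omega⟩
        · -- y ≥ 2 : out of range
          exfalso
          rw [hx1] at hq
          have h2 : 2 * cfQ α (n + 3) ≤ y * cfQ α (n + 3) :=
            mul_le_mul_of_nonneg_right (by omega) (by omega)
          omega
      · -- x ≤ -2
        have hx2 : x ≤ -2 := by omega
        rcases eq_or_lt_of_le hy' with hy1 | hy1
        · -- y = 1 : q negative, contradiction
          exfalso
          rw [← hy1] at hq
          have h2 : 2 * cfQ α (n + 2) ≤ (-x) * cfQ α (n + 2) :=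
            mul_le_mul_of_nonneg_right (by omega) (by omega)
          have h3 : x * cfQ α (n + 2) = -((-x) * cfQ α (n + 2)) := by ring
          omega
        · -- y ≥ 2 : value bound
          have hy2 : 2 ≤ y := hy1
          have hb : 2 * (ζ1 + ζ2) ≤ -((x : ℝ) * ζ1 - (y : ℝ) * ζ2) := by
            have c1 : (x : ℝ) ≤ -2 := by exact_mod_cast hx2
            have c2 : (2 : ℝ) ≤ (y : ℝ) := by exact_mod_cast hy2
            nlinarith [mul_nonneg (by linarith : (0:ℝ) ≤ -(x:ℝ) - 2) hz1.le,
              mul_nonneg (by linarith : (0:ℝ) ≤ (y:ℝ) - 2) hz2.le]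
          exact le_trans hb (neg_le_abs _)
    · -- x = 0
      exfalso
      subst hx
      rw [zero_mul, zero_add] at hq
      rcases eq_or_lt_of_le hy' with hy1 | hy1
      · exact hpq (n + 2) ⟨by rw [hp, ← hy1]; simp [cfNum], by rw [hq, ← hy1]; simp [cfDen]⟩
      · have h2 : 2 * cfQ α (n + 3) ≤ y * cfQ α (n + 3) :=
          mul_le_mul_of_nonneg_right (by omega) (by omega)
        omega
    · -- x ≥ 1
      exfalso
      have h2 : cfQ α (n + 2) ≤ x * cfQ α (n + 2) := le_mul_of_one_le_left (by omega) hx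
      omega

lemma psi2_bdd (α t : ℝ) : BddBelow {x : ℝ | ∃ p q : ℤ, 1 ≤ q ∧ (q : ℝ) ≤ t ∧
    (∀ n : ℕ, ¬(p = cfNum α n ∧ q = cfDen α n)) ∧ x = |(q : ℝ) * α - (p : ℝ)|} := by
  refine ⟨0, ?_⟩
  rintro x ⟨p, q, _, _, _, rfl⟩
  exact abs_nonneg _

lemma not_conv_neg_one (α : ℝ) (hα : Irrational α) (h0 : 0 < α) :
    ∀ k : ℕ, ¬((-1 : ℤ) = cfNum α k ∧ (1 : ℤ) = cfDen α k) := by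
  intro k ⟨h, _⟩
  have := P_nonneg α hα h0 (k + 1)
  rw [cfNum] at h
  omega

lemma psi2_nonempty (α : ℝ) (hα : Irrational α) (h0 : 0 < α) (t : ℝ) (ht : 1 ≤ t) :
    Set.Nonempty {x : ℝ | ∃ p q : ℤ, 1 ≤ q ∧ (q : ℝ) ≤ t ∧
      (∀ n : ℕ, ¬(p = cfNum α n ∧ q = cfDen α n)) ∧ x = |(q : ℝ) * α - (p : ℝ)|} :=
  ⟨_, ⟨-1, 1, le_refl 1, by exact_mod_cast ht, not_conv_neg_one α hα h0, rfl⟩⟩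

lemma not_den_2qn (α : ℝ) (hα : Irrational α) (n : ℕ) (hn : 3 ≤ n)
    (ha' : cfA α (n + 1) = 1) (ha'' : cfA α (n + 2) = 1) :
    ∀ k : ℕ, 2 * cfQ α (n + 1) ≠ cfQ α (k + 1) := by
  intro k hk
  have hQrec3 : cfQ α (n + 3) = cfQ α (n + 2) + cfQ α (n + 1) := by
    show cfA α (n + 2) * cfQ α (n + 2) + cfQ α (n + 1) = _
    rw [ha'']; ring
  have hQrec2 : cfQ α (n + 2) = cfQ α (n + 1) + cfQ α n := by
    show cfA α (n + 1) * cfQ α (n + 1) + cfQ α n = _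
    rw [ha']; ring
  have hs : cfQ α n < cfQ α (n + 1) := Q_strict α hα n (by omega)
  have hQn : 1 ≤ cfQ α n := Q_pos α hα n (by omega)
  rcases Nat.lt_or_ge (k + 1) (n + 3) with h | h
  · have : cfQ α (k + 1) ≤ cfQ α (n + 2) := Q_mono' α hα (k + 1) (n + 2) (by omega) (by omega)
    omega
  · have : cfQ α (n + 3) ≤ cfQ α (k + 1) := Q_mono' α hα (n + 3) (k + 1) (by omega) h
    omega

lemma not_den_2qn1 (α : ℝ) (hα : Irrational α) (n : ℕ) (hn : 3 ≤ n)
    (ha'' : cfA α (n + 2) = 1) :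
    ∀ k : ℕ, 2 * cfQ α (n + 2) ≠ cfQ α (k + 1) := by
  intro k hk
  have hQrec3 : cfQ α (n + 3) = cfQ α (n + 2) + cfQ α (n + 1) := by
    show cfA α (n + 2) * cfQ α (n + 2) + cfQ α (n + 1) = _
    rw [ha'']; ring
  have hQrec4 : cfQ α (n + 4) = cfA α (n + 3) * cfQ α (n + 3) + cfQ α (n + 2) := rfl
  have hs : cfQ α (n + 1) < cfQ α (n + 2) := Q_strict α hα (n + 1) (by omega)
  have hQn : 1 ≤ cfQ α (n + 1) := Q_pos α hα (n + 1) (by omega)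
  have ha4 : 1 ≤ cfA α (n + 3) := cfA_pos α hα (n + 2)
  have h3pos : 1 ≤ cfQ α (n + 3) := Q_pos α hα (n + 3) (by omega)
  have hmm : cfQ α (n + 3) ≤ cfA α (n + 3) * cfQ α (n + 3) :=
    le_mul_of_one_le_left (by omega) ha4
  rcases Nat.lt_or_ge (k + 1) (n + 4) with h | h
  · have : cfQ α (k + 1) ≤ cfQ α (n + 3) := Q_mono' α hα (k + 1) (n + 3) (by omega) (by omega)
    omega
  · have : cfQ α (n + 4) ≤ cfQ α (k + 1) := Q_mono' α hα (n + 4) (k + 1) (by omega) h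
    omega

lemma val_double (α : ℝ) (m : ℕ) :
    |((2 * cfQ α m : ℤ) : ℝ) * α - ((2 * cfP α m : ℤ) : ℝ)| = 2 * ee α m := by
  have : ((2 * cfQ α m : ℤ) : ℝ) * α - ((2 * cfP α m : ℤ) : ℝ) = 2 * dd α m := by
    unfold dd; push_cast; ring
  rw [this, abs_mul, abs_two, ee]

lemma psi2_eval_mid (α : ℝ) (hα : Irrational α) (h0 : 0 < α) (h1 : α < 1)
    (n : ℕ) (hn : 3 ≤ n) (ha : cfA α n = 1) (ha' : cfA α (n + 1) = 1) (ha'' : cfA α (n + 2) = 1)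
    (t : ℝ) (ht1 : ((2 * cfQ α (n + 1) : ℤ) : ℝ) ≤ t) (ht2 : t < ((2 * cfQ α (n + 2) : ℤ) : ℝ)) :
    psi2Fn α t = 2 * ee α (n + 1) := by
  have hQ1 : 1 ≤ cfQ α (n + 1) := Q_pos α hα (n + 1) (by omega)
  have hexcl : ∀ k : ℕ, ¬(2 * cfP α (n + 1) = cfNum α k ∧ 2 * cfQ α (n + 1) = cfDen α k) := by
    intro k ⟨_, h⟩
    exact not_den_2qn α hα n hn ha' ha'' k (by rw [cfDen] at h; exact h)
  apply le_antisymm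
  · apply csInf_le (psi2_bdd α t)
    exact ⟨2 * cfP α (n + 1), 2 * cfQ α (n + 1), by omega, ht1, hexcl, (val_double α (n + 1)).symm⟩
  · apply le_csInf
    · exact ⟨_, ⟨2 * cfP α (n + 1), 2 * cfQ α (n + 1), by omega, ht1, hexcl,
        (val_double α (n + 1)).symm⟩⟩
    · rintro x ⟨p, q, hq1, hqt, hex, rfl⟩
      have hq2 : q ≤ 2 * cfQ α (n + 2) - 1 := by
        have : (q : ℝ) < ((2 * cfQ α (n + 2) : ℤ) : ℝ) := lt_of_le_of_lt hqt ht2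
        have := Int.cast_lt.mp this
        omega
      exact L2 α hα h0 h1 n hn ha ha' ha'' p q hq1 hq2 hex

lemma psi2_lb_left (α : ℝ) (hα : Irrational α) (h0 : 0 < α) (h1 : α < 1)
    (n : ℕ) (hn : 3 ≤ n) (ha : cfA α n = 1) (ha' : cfA α (n + 1) = 1)
    (t : ℝ) (ht1 : 1 ≤ t) (ht2 : t < ((2 * cfQ α (n + 1) : ℤ) : ℝ)) :
    2 * ee α (n + 1) + ee α (n + 2) ≤ psi2Fn α t := by
  apply le_csInf (psi2_nonempty α hα h0 t ht1)
  rintro x ⟨p, q, hq1, hqt, hex, rfl⟩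
  have hq2 : q ≤ 2 * cfQ α (n + 1) - 1 := by
    have : (q : ℝ) < ((2 * cfQ α (n + 1) : ℤ) : ℝ) := lt_of_le_of_lt hqt ht2
    have := Int.cast_lt.mp this
    omega
  exact L1 α hα h0 h1 n hn ha ha' p q hq1 hq2 hex

lemma psi2_ub_right (α : ℝ) (hα : Irrational α) (h0 : 0 < α)
    (n : ℕ) (hn : 3 ≤ n) (ha'' : cfA α (n + 2) = 1)
    (t : ℝ) (ht : ((2 * cfQ α (n + 2) : ℤ) : ℝ) ≤ t) :
    psi2Fn α t ≤ 2 * ee α (n + 2) := by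
  have hQ1 : 1 ≤ cfQ α (n + 2) := Q_pos α hα (n + 2) (by omega)
  have hexcl : ∀ k : ℕ, ¬(2 * cfP α (n + 2) = cfNum α k ∧ 2 * cfQ α (n + 2) = cfDen α k) := by
    intro k ⟨_, h⟩
    exact not_den_2qn1 α hα n hn ha'' k (by rw [cfDen] at h; exact h)
  apply csInf_le (psi2_bdd α t)
  exact ⟨2 * cfP α (n + 2), 2 * cfQ α (n + 2), by omega, ht, hexcl, (val_double α (n + 2)).symm⟩

lemma discont_of {f : ℝ → ℝ} {m : ℝ} {A B : ℝ} (hAB : A < B)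
    (hfm : f m ≤ A) (hleft : ∀ t, m - 1 < t → t < m → B ≤ f t) : ¬ ContinuousAt f m := by
  intro h
  have h2 : Filter.Tendsto f (nhdsWithin m (Set.Iio m)) (nhds (f m)) :=
    h.tendsto.mono_left nhdsWithin_le_nhds
  have hev : ∀ᶠ t in nhdsWithin m (Set.Iio m), B ≤ f t := by
    filter_upwards [Ioo_mem_nhdsLT_of_mem
      (⟨by linarith, le_refl m⟩ : m ∈ Set.Ioc (m - 1) m)] with t ht
    exact hleft t ht.1 ht.2
  have hB : B ≤ f m := ge_of_tendsto h2 hev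
  linarith

lemma mid_cont (α : ℝ) (hα : Irrational α) (h0 : 0 < α) (h1 : α < 1)
    (n : ℕ) (hn : 3 ≤ n) (ha : cfA α n = 1) (ha' : cfA α (n + 1) = 1) (ha'' : cfA α (n + 2) = 1)
    (z : ℤ) (hz1 : 2 * cfQ α (n + 1) < z) (hz2 : z < 2 * cfQ α (n + 2)) :
    ContinuousAt (psi2Fn α) (z : ℝ) := by
  have hc1 : ((2 * cfQ α (n + 1) : ℤ) : ℝ) ≤ (z : ℝ) - 1 := by
    have h : (2 * cfQ α (n + 1) : ℤ) ≤ z - 1 := by omega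
    exact_mod_cast h
  have hc2 : (z : ℝ) + 1 ≤ ((2 * cfQ α (n + 2) : ℤ) : ℝ) := by
    have h : z + 1 ≤ (2 * cfQ α (n + 2) : ℤ) := by omega
    exact_mod_cast h
  have hev : psi2Fn α =ᶠ[nhds (z : ℝ)] fun _ => 2 * ee α (n + 1) := by
    filter_upwards [Ioo_mem_nhds (by linarith : (z : ℝ) - 1 < (z : ℝ))
      (by linarith : (z : ℝ) < (z : ℝ) + 1)] with t ht
    exact psi2_eval_mid α hα h0 h1 n hn ha ha' ha'' t (by linarith [ht.1])
      (by linarith [ht.2])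
  exact hev.continuousAt

lemma mem_QSet_1 (α : ℝ) (hα : Irrational α) (h0 : 0 < α) (h1 : α < 1)
    (n : ℕ) (hn : 3 ≤ n) (ha : cfA α n = 1) (ha' : cfA α (n + 1) = 1) (ha'' : cfA α (n + 2) = 1) :
    ¬ ContinuousAt (psi2Fn α) (((2 * cfQ α (n + 1) : ℤ) : ℝ)) := by
  set m : ℝ := ((2 * cfQ α (n + 1) : ℤ) : ℝ) with hm
  have hQ1 : 1 ≤ cfQ α (n + 1) := Q_pos α hα (n + 1) (by omega)
  have hQlt : (2 * cfQ α (n + 1) : ℤ) < 2 * cfQ α (n + 2) := by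
    have h := Q_strict α hα (n + 1) (by omega)
    rw [show n + 1 + 1 = n + 2 from rfl] at h
    omega
  have hmlt : m < ((2 * cfQ α (n + 2) : ℤ) : ℝ) := by rw [hm]; exact_mod_cast hQlt
  have hm2 : (2 : ℝ) ≤ m := by
    rw [hm]
    exact_mod_cast (show (2 : ℤ) ≤ 2 * cfQ α (n + 1) by omega)
  refine discont_of (A := 2 * ee α (n + 1)) (B := 2 * ee α (n + 1) + ee α (n + 2)) ?_ ?_ ?_
  · linarith [ee_pos α hα (n + 2)]
  · exact le_of_eq (psi2_eval_mid α hα h0 h1 n hn ha ha' ha'' m (le_refl m) hmlt)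
  · intro t ht1 ht2
    exact psi2_lb_left α hα h0 h1 n hn ha ha' t (by linarith) ht2

lemma mem_QSet_2 (α : ℝ) (hα : Irrational α) (h0 : 0 < α) (h1 : α < 1)
    (n : ℕ) (hn : 3 ≤ n) (ha : cfA α n = 1) (ha' : cfA α (n + 1) = 1) (ha'' : cfA α (n + 2) = 1) :
    ¬ ContinuousAt (psi2Fn α) (((2 * cfQ α (n + 2) : ℤ) : ℝ)) := by
  set m : ℝ := ((2 * cfQ α (n + 2) : ℤ) : ℝ) with hm
  have hQlt : (2 * cfQ α (n + 1) : ℤ) < 2 * cfQ α (n + 2) := by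
    have h := Q_strict α hα (n + 1) (by omega)
    rw [show n + 1 + 1 = n + 2 from rfl] at h
    omega
  have hmge : ((2 * cfQ α (n + 1) : ℤ) : ℝ) ≤ m - 1 := by
    rw [hm]
    have h : ((2 * cfQ α (n + 1) : ℤ) : ℝ) + 1 ≤ ((2 * cfQ α (n + 2) : ℤ) : ℝ) := by
      exact_mod_cast (show (2 * cfQ α (n + 1) : ℤ) + 1 ≤ 2 * cfQ α (n + 2) by omega)
    linarith
  refine discont_of (A := 2 * ee α (n + 2)) (B := 2 * ee α (n + 1)) ?_ ?_ ?_
  · have := ee_decr α hα (n + 1)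
    linarith
  · exact psi2_ub_right α hα h0 n hn ha'' m (le_refl m)
  · intro t ht1 ht2
    exact le_of_eq (psi2_eval_mid α hα h0 h1 n hn ha ha' ha'' t (by linarith) ht2).symm

end Stmt15Aux

open Stmt15Aux in
/-- Let `α ∈ (0,1)` be irrational, `n ≥ 3` and
`aₙ = a_{n+1} = a_{n+2} = 1`. Then `2qₙ` and `2q_{n+1}` are two successive elements
of `𝔔(α)`. -/
theorem stmt15 (α : ℝ) (hα : Irrational α) (h0 : 0 < α) (h1 : α < 1)
    (n : ℕ) (hn : 3 ≤ n) (ha : cfA α n = 1)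
    (ha' : cfA α (n + 1) = 1) (ha'' : cfA α (n + 2) = 1) :
    SuccessiveIn (QSet α) [2 * cfDen α n, 2 * cfDen α (n + 1)] := by
  have hd1 : cfDen α n = cfQ α (n + 1) := rfl
  have hd2 : cfDen α (n + 1) = cfQ α (n + 2) := rfl
  have hQlt : cfQ α (n + 1) < cfQ α (n + 2) := by
    have h := Q_strict α hα (n + 1) (by omega)
    rwa [show n + 1 + 1 = n + 2 from rfl] at h
  have hQ1 : 1 ≤ cfQ α (n + 1) := Q_pos α hα (n + 1) (by omega)
  constructor
  · intro x hx
    simp only [List.mem_cons, List.not_mem_nil, or_false] at hx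
    rcases hx with rfl | rfl
    · refine ⟨by rw [hd1]; omega, ?_⟩
      have h := mem_QSet_1 α hα h0 h1 n hn ha ha' ha''
      rw [hd1]
      exact_mod_cast h
    · refine ⟨by rw [hd2]; omega, ?_⟩
      have h := mem_QSet_2 α hα h0 h1 n hn ha ha' ha''
      rw [hd2]
      exact_mod_cast h
  · unfold List.Chain'
    rw [List.isChain_cons_cons]
    refine ⟨⟨by rw [hd1, hd2]; omega, ?_⟩, List.isChain_singleton _⟩
    rintro z ⟨hzpos, hzdis⟩ ⟨hz1, hz2⟩
    rw [hd1] at hz1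
    rw [hd2] at hz2
    exact hzdis (mid_cont α hα h0 h1 n hn ha ha' ha'' z hz1 hz2)
end

section
/- Let n ≥ 3 and suppose a_n ≥ 2. Then the a_n − 1 numbers q_{n-2} + j·q_{n-1}, for j = 1, 2, …, a_n − 1, are a_n − 1 successive elements of 𝔛(α). -/
open Filter Real Set

namespace Stmt16Aux

noncomputable def E (α : ℝ) (k : ℕ) : ℝ := (cfQ α k : ℝ) * α - (cfP α k : ℝ)

lemma irr_inv {x : ℝ} (h : Irrational x) : Irrational x⁻¹ := by
  rintro ⟨q, hq⟩
  exact h ⟨q⁻¹, by rw [Rat.cast_inv, hq, inv_inv]⟩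

lemma gauss_irr {α : ℝ} (hα : Irrational α) : ∀ k, Irrational (gaussIter α k)
  | 0 => hα
  | (k+1) => by
      have h := gauss_irr hα k
      have h2 : Irrational (Int.fract (gaussIter α k)) := by
        rw [← Int.self_sub_floor]
        exact h.sub_intCast ⌊gaussIter α k⌋
      exact irr_inv h2

lemma fract_pos {α : ℝ} (hα : Irrational α) (k : ℕ) : 0 < Int.fract (gaussIter α k) := by
  rcases (Int.fract_nonneg (gaussIter α k)).lt_or_eq with h | h
  · exact h
  · exfalso
    have h2 : Irrational (Int.fract (gaussIter α k)) := by
      rw [← Int.self_sub_floor]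
      exact (gauss_irr hα k).sub_intCast ⌊gaussIter α k⌋
    exact h2 ⟨0, by simpa using h⟩

lemma gauss_gt_one {α : ℝ} (hα : Irrational α) (k : ℕ) : 1 < gaussIter α (k+1) := by
  have h1 : Int.fract (gaussIter α k) < 1 := Int.fract_lt_one _
  have h0 : 0 < Int.fract (gaussIter α k) := fract_pos hα k
  show 1 < (Int.fract (gaussIter α k))⁻¹
  exact (one_lt_inv₀ h0).2 h1

lemma cfA_ge_one {α : ℝ} (hα : Irrational α) (k : ℕ) : 1 ≤ cfA α (k+1) := by
  have h := gauss_gt_one hα k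
  exact Int.le_floor.mpr (by exact_mod_cast h.le)

lemma cfQ_zero (α : ℝ) : cfQ α 0 = 0 := rfl
lemma cfQ_one (α : ℝ) : cfQ α 1 = 1 := rfl
lemma cfP_zero (α : ℝ) : cfP α 0 = 1 := rfl
lemma cfP_one (α : ℝ) : cfP α 1 = ⌊α⌋ := rfl
lemma cfQ_rec (α : ℝ) (k : ℕ) : cfQ α (k+2) = cfA α (k+1) * cfQ α (k+1) + cfQ α k := rfl
lemma cfP_rec (α : ℝ) (k : ℕ) : cfP α (k+2) = cfA α (k+1) * cfP α (k+1) + cfP α k := rfl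

lemma E_zero (α : ℝ) : E α 0 = -1 := by
  unfold E; rw [cfQ_zero, cfP_zero]; norm_num

lemma E_rec (α : ℝ) (k : ℕ) :
    E α (k+2) = (cfA α (k+1) : ℝ) * E α (k+1) + E α k := by
  unfold E
  rw [cfQ_rec, cfP_rec]
  push_cast
  ring

lemma E_succ {α : ℝ} (hα : Irrational α) :
    ∀ k, E α (k+1) = -(E α k) * Int.fract (gaussIter α k)
  | 0 => by
      rw [E_zero]
      show (cfQ α 1 : ℝ) * α - (cfP α 1 : ℝ) = _
      rw [cfQ_one, cfP_one]
      show _ = -(-1 : ℝ) * Int.fract α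
      rw [Int.fract]
      push_cast
      ring
  | (k+1) => by
      have ih := E_succ hα k
      have hf : Int.fract (gaussIter α k) ≠ 0 := (fract_pos hα k).ne'
      have hg : gaussIter α (k+1) = (Int.fract (gaussIter α k))⁻¹ := rfl
      have h2 : E α k = -(E α (k+1)) * gaussIter α (k+1) := by
        rw [ih, hg]
        field_simp
      rw [E_rec, h2]
      show (((⌊gaussIter α (k+1)⌋ : ℤ) : ℝ)) * E α (k+1) + _ = _
      rw [Int.fract]
      ring

lemma E_sign {α : ℝ} (hα : Irrational α) : ∀ k, 0 < (-1:ℝ)^(k+1) * E α k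
  | 0 => by rw [E_zero]; norm_num
  | (k+1) => by
      have ih := E_sign hα k
      have hf := fract_pos hα k
      rw [E_succ hα k, pow_succ]
      nlinarith [mul_pos ih hf]

lemma E_ne {α : ℝ} (hα : Irrational α) (k : ℕ) : E α k ≠ 0 := by
  intro h
  have := E_sign hα k
  rw [h] at this
  simp at this

lemma E_mul_neg {α : ℝ} (hα : Irrational α) (k : ℕ) : E α (k+1) * E α (k+2) < 0 := by
  rw [E_succ hα (k+1)]
  have h0 := fract_pos hα (k+1)
  have hne : E α (k+1) ≠ 0 := E_ne hα (k+1)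
  nlinarith [mul_self_pos.mpr hne]

lemma E_abs_le_one {α : ℝ} (hα : Irrational α) : ∀ k, |E α k| ≤ 1
  | 0 => by rw [E_zero]; norm_num
  | (k+1) => by
      have ih := E_abs_le_one hα k
      rw [E_succ hα k, abs_mul, abs_neg]
      have h1 : |Int.fract (gaussIter α k)| ≤ 1 := by
        rw [abs_of_nonneg (Int.fract_nonneg _)]
        exact (Int.fract_lt_one _).le
      nlinarith [abs_nonneg (E α k), abs_nonneg (Int.fract (gaussIter α k))]

lemma E_abs_lt_one {α : ℝ} (hα : Irrational α) (k : ℕ) : |E α (k+1)| < 1 := by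
  rw [E_succ hα k, abs_mul, abs_neg]
  have h1 : |Int.fract (gaussIter α k)| < 1 := by
    rw [abs_of_nonneg (Int.fract_nonneg _)]
    exact Int.fract_lt_one _
  have h2 := E_abs_le_one hα k
  have h3 : (0:ℝ) < |E α k| := abs_pos.mpr (E_ne hα k)
  nlinarith

lemma cfQ_facts {α : ℝ} (hα : Irrational α) :
    ∀ k, 0 ≤ cfQ α k ∧ 1 ≤ cfQ α (k+1) ∧ cfQ α k ≤ cfQ α (k+1)
  | 0 => by rw [cfQ_zero, cfQ_one]; omega
  | (k+1) => by
      obtain ⟨h0, h1, h2⟩ := cfQ_facts hα k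
      have ha := cfA_ge_one hα k
      have hrec : cfQ α (k+2) = cfA α (k+1) * cfQ α (k+1) + cfQ α k := rfl
      refine ⟨by linarith, ?_, ?_⟩
      · rw [hrec]; nlinarith
      · rw [hrec]; nlinarith

lemma cfQ_ge_one {α : ℝ} (hα : Irrational α) (k : ℕ) : 1 ≤ cfQ α (k+1) :=
  (cfQ_facts hα k).2.1

lemma cfQ_mono {α : ℝ} (hα : Irrational α) {k l : ℕ} (h : k ≤ l) :
    cfQ α (k+1) ≤ cfQ α (l+1) := by
  induction l, h using Nat.le_induction with
  | base => exact le_refl _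
  | succ l hl ih => exact le_trans ih (cfQ_facts hα (l+1)).2.2

lemma det_succ (α : ℝ) (k : ℕ) :
    cfP α (k+2) * cfQ α (k+1) - cfP α (k+1) * cfQ α (k+2)
      = -(cfP α (k+1) * cfQ α k - cfP α k * cfQ α (k+1)) := by
  rw [cfP_rec, cfQ_rec]; ring

lemma det_sq (α : ℝ) :
    ∀ k, (cfP α (k+1) * cfQ α k - cfP α k * cfQ α (k+1))
        * (cfP α (k+1) * cfQ α k - cfP α k * cfQ α (k+1)) = 1
  | 0 => by rw [cfP_one, cfQ_zero, cfP_zero, cfQ_one]; ring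
  | (k+1) => by rw [det_succ, neg_mul_neg]; exact det_sq α k

lemma copr (α : ℝ) (k : ℕ) : IsCoprime (cfP α (k+1)) (cfQ α (k+1)) := by
  have hdd := det_sq α (k+1)
  exact ⟨-(cfQ α (k+2)) * (cfP α (k+2) * cfQ α (k+1) - cfP α (k+1) * cfQ α (k+2)),
    cfP α (k+2) * (cfP α (k+2) * cfQ α (k+1) - cfP α (k+1) * cfQ α (k+2)),
    by linear_combination hdd⟩

lemma decomp (α : ℝ) (m : ℕ) (p q : ℤ) :
    ∃ x y : ℤ, x * cfP α (m+3) + y * cfP α (m+2) = p ∧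
      x * cfQ α (m+3) + y * cfQ α (m+2) = q := by
  have hdd := det_sq α (m+2)
  set d := cfP α (m+3) * cfQ α (m+2) - cfP α (m+2) * cfQ α (m+3) with hd
  refine ⟨d * (p * cfQ α (m+2) - q * cfP α (m+2)),
    d * (q * cfP α (m+3) - p * cfQ α (m+3)), ?_, ?_⟩
  · linear_combination p * hdd - d * p * hd
  · linear_combination q * hdd - d * q * hd

lemma cfXi_eq (α : ℝ) (k : ℕ) : cfXi α k = |E α (k+1)| := rfl

lemma arith_bound (A B : ℝ) (x y j Q1 Q2 : ℤ)
    (hA : 0 < A) (hB : 0 < B) (hj0 : 0 ≤ j)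
    (hjA : ((j:ℝ)+1) * A ≤ B)
    (hQ1 : 1 ≤ Q1) (hQ2 : 1 ≤ Q2)
    (hq1 : 1 ≤ x*Q2 + y*Q1) (hqlt : x*Q2 + y*Q1 < Q1 + (j+1)*Q2)
    (hx0 : x ≠ 0) (hy0 : y ≠ 0) :
    B - (j:ℝ)*A ≤ |(x:ℝ)*A - (y:ℝ)*B| := by
  have hj0R : (0:ℝ) ≤ (j:ℝ) := by exact_mod_cast hj0
  have hjAnn : 0 ≤ (j:ℝ) * A := mul_nonneg hj0R hA.le
  rcases hx0.lt_or_gt with hx | hx <;> rcases hy0.lt_or_gt with hy | hy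
  · -- x < 0, y < 0 : impossible
    exfalso
    have h1 : x*Q2 ≤ -Q2 := by nlinarith [mul_nonneg (by omega : (0:ℤ) ≤ -1 - x) (by omega : (0:ℤ) ≤ Q2)]
    have h2 : y*Q1 ≤ -Q1 := by nlinarith [mul_nonneg (by omega : (0:ℤ) ≤ -1 - y) (by omega : (0:ℤ) ≤ Q1)]
    omega
  · -- x < 0, y > 0
    have hxr : (x:ℝ) ≤ -1 := by exact_mod_cast (by omega : x ≤ -1)
    have hyr : (1:ℝ) ≤ (y:ℝ) := by exact_mod_cast (by omega : 1 ≤ y)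
    have key : B - (j:ℝ)*A ≤ -((x:ℝ)*A - (y:ℝ)*B) := by
      nlinarith [mul_nonneg (by linarith : (0:ℝ) ≤ (y:ℝ) - 1) hB.le,
        mul_nonneg (by linarith : (0:ℝ) ≤ -(x:ℝ) - 1) hA.le]
    exact key.trans (neg_le_abs _)
  · -- x > 0, y < 0
    have hxr : (1:ℝ) ≤ (x:ℝ) := by exact_mod_cast (by omega : 1 ≤ x)
    have hyr : (y:ℝ) ≤ -1 := by exact_mod_cast (by omega : y ≤ -1)
    have key : B - (j:ℝ)*A ≤ (x:ℝ)*A - (y:ℝ)*B := by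
      nlinarith [mul_nonneg (by linarith : (0:ℝ) ≤ -(y:ℝ) - 1) hB.le,
        mul_nonneg (by linarith : (0:ℝ) ≤ (x:ℝ) - 1) hA.le]
    exact key.trans (le_abs_self _)
  · -- x > 0, y > 0
    have h5 : x * Q2 < (j+1) * Q2 := by
      nlinarith [mul_nonneg (by omega : (0:ℤ) ≤ y - 1) (by omega : (0:ℤ) ≤ Q1)]
    have hxj : x ≤ j := by
      have := lt_of_mul_lt_mul_right h5 (by omega : (0:ℤ) ≤ Q2)
      omega
    have hxjR : (x:ℝ) ≤ (j:ℝ) := by exact_mod_cast hxj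
    have hyr : (1:ℝ) ≤ (y:ℝ) := by exact_mod_cast (by omega : 1 ≤ y)
    have key : B - (j:ℝ)*A ≤ -((x:ℝ)*A - (y:ℝ)*B) := by
      nlinarith [mul_nonneg (by linarith : (0:ℝ) ≤ (y:ℝ) - 1) hB.le,
        mul_nonneg (by linarith : (0:ℝ) ≤ (j:ℝ) - (x:ℝ)) hA.le]
    exact key.trans (neg_le_abs _)

lemma xi_big {α : ℝ} (hα : Irrational α) (m : ℕ) :
    (cfA α (m+3) : ℝ) * |E α (m+3)| < |E α (m+2)| := by
  have hrec := E_rec α (m+2)  -- E (m+4) = cfA (m+3) * E (m+3) + E (m+2)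
  have h1 := E_mul_neg hα (m+1)  -- E(m+2) * E(m+3) < 0
  have h2 := E_mul_neg hα (m+2)  -- E(m+3) * E(m+4) < 0
  have hne3 := E_ne hα (m+3)
  rcases hne3.lt_or_gt with h3 | h3
  · have h2' : 0 < E α (m+2) := by nlinarith
    have h4' : 0 < E α (m+4) := by nlinarith
    rw [abs_of_neg h3, abs_of_pos h2']
    nlinarith
  · have h2' : E α (m+2) < 0 := by nlinarith
    have h4' : E α (m+4) < 0 := by nlinarith
    rw [abs_of_pos h3, abs_of_neg h2']
    nlinarith

lemma key_lb {α : ℝ} (hα : Irrational α) (m : ℕ) (j : ℤ) (hj0 : 0 ≤ j)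
    (hja : j ≤ cfA α (m+3) - 1) (p q : ℤ) (hq1 : 1 ≤ q)
    (hqlt : q < cfQ α (m+2) + (j+1) * cfQ α (m+3))
    (hne : ∀ k : ℕ, (p:ℝ)/(q:ℝ) ≠ (cfNum α k : ℝ)/(cfDen α k : ℝ)) :
    cfXi α (m+1) - (j:ℝ) * cfXi α (m+2) ≤ |(q:ℝ)*α - (p:ℝ)| := by
  obtain ⟨x, y, hp, hq⟩ := decomp α m p q
  have hQ1 : 1 ≤ cfQ α (m+2) := cfQ_ge_one hα (m+1)
  have hQ2 : 1 ≤ cfQ α (m+3) := cfQ_ge_one hα (m+2)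
  have hqR : (0:ℝ) < (q:ℝ) := by exact_mod_cast (by omega : (0:ℤ) < q)
  -- x ≠ 0
  have hx0 : x ≠ 0 := by
    rintro rfl
    simp only [zero_mul, zero_add] at hp hq
    have hy : y ≠ 0 := by
      rintro rfl; simp at hq; omega
    apply hne (m+1)
    show (p:ℝ)/(q:ℝ) = ((cfP α (m+2) : ℤ):ℝ)/((cfQ α (m+2) : ℤ):ℝ)
    rw [← hp, ← hq]
    push_cast
    rw [mul_div_mul_left _ _ (by exact_mod_cast hy : ((y:ℝ)) ≠ 0)]
  have hy0 : y ≠ 0 := by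
    rintro rfl
    simp only [mul_zero, zero_mul, add_zero] at hp hq
    have hx : x ≠ 0 := by
      rintro rfl; simp at hq; omega
    apply hne (m+2)
    show (p:ℝ)/(q:ℝ) = ((cfP α (m+3) : ℤ):ℝ)/((cfQ α (m+3) : ℤ):ℝ)
    rw [← hp, ← hq]
    push_cast
    rw [mul_div_mul_left _ _ (by exact_mod_cast hx : ((x:ℝ)) ≠ 0)]
  -- value identity
  have hpR : (x:ℝ) * (cfP α (m+3) : ℝ) + (y:ℝ) * (cfP α (m+2) : ℝ) = (p:ℝ) := by
    exact_mod_cast congrArg (Int.cast : ℤ → ℝ) hp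
  have hqRR : (x:ℝ) * (cfQ α (m+3) : ℝ) + (y:ℝ) * (cfQ α (m+2) : ℝ) = (q:ℝ) := by
    exact_mod_cast congrArg (Int.cast : ℤ → ℝ) hq
  have hval : (q:ℝ)*α - (p:ℝ) = (x:ℝ) * E α (m+3) + (y:ℝ) * E α (m+2) := by
    unfold E
    linear_combination α * hqRR.symm - hpR.symm
  -- signs
  have h1 := E_mul_neg hα (m+1)  -- E(m+2) * E(m+3) < 0
  have hne2 := E_ne hα (m+2)
  have hne3 := E_ne hα (m+3)
  have hbig := xi_big hα m
  have haR : ((j:ℝ)+1) ≤ (cfA α (m+3) : ℝ) := by exact_mod_cast (by omega : j + 1 ≤ cfA α (m+3))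
  rw [cfXi_eq, cfXi_eq, hval]
  have hA : 0 < |E α (m+3)| := abs_pos.mpr hne3
  have hB : 0 < |E α (m+2)| := abs_pos.mpr hne2
  have hjA : ((j:ℝ)+1) * |E α (m+3)| ≤ |E α (m+2)| := by nlinarith
  rcases hne3.lt_or_gt with h3 | h3
  · have h2' : 0 < E α (m+2) := by nlinarith
    have hre : (x:ℝ) * E α (m+3) + (y:ℝ) * E α (m+2)
        = -((x:ℝ) * |E α (m+3)| - (y:ℝ) * |E α (m+2)|) := by
      rw [abs_of_neg h3, abs_of_pos h2']; ring
    rw [hre, abs_neg]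
    exact arith_bound _ _ x y j _ _ hA hB hj0 hjA hQ1 hQ2 (hq ▸ hq1) (hq ▸ hqlt) hx0 hy0
  · have h2' : E α (m+2) < 0 := by nlinarith
    have hre : (x:ℝ) * E α (m+3) + (y:ℝ) * E α (m+2)
        = (x:ℝ) * |E α (m+3)| - (y:ℝ) * |E α (m+2)| := by
      rw [abs_of_pos h3, abs_of_neg h2']; ring
    rw [hre]
    exact arith_bound _ _ x y j _ _ hA hB hj0 hjA hQ1 hQ2 (hq ▸ hq1) (hq ▸ hqlt) hx0 hy0

lemma witness_val {α : ℝ} (hα : Irrational α) (m : ℕ) (j : ℤ) (hj0 : 0 ≤ j)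
    (hja : j ≤ cfA α (m+3) - 1) :
    |(((cfQ α (m+2) + j * cfQ α (m+3)) : ℤ):ℝ)*α - (((cfP α (m+2) + j * cfP α (m+3)) : ℤ):ℝ)|
      = cfXi α (m+1) - (j:ℝ)*cfXi α (m+2) := by
  have hval : (((cfQ α (m+2) + j * cfQ α (m+3)) : ℤ):ℝ)*α - (((cfP α (m+2) + j * cfP α (m+3)) : ℤ):ℝ)
      = E α (m+2) + (j:ℝ) * E α (m+3) := by
    unfold E; push_cast; ring
  have h1 := E_mul_neg hα (m+1)
  have hne2 := E_ne hα (m+2)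
  have hne3 := E_ne hα (m+3)
  have hbig := xi_big hα m
  have haR : ((j:ℝ)+1) ≤ (cfA α (m+3) : ℝ) := by exact_mod_cast (by omega : j + 1 ≤ cfA α (m+3))
  have hj0R : (0:ℝ) ≤ (j:ℝ) := by exact_mod_cast hj0
  have hA : 0 < |E α (m+3)| := abs_pos.mpr hne3
  rw [cfXi_eq, cfXi_eq, hval]
  rcases hne3.lt_or_gt with h3 | h3
  · have h2' : 0 < E α (m+2) := by nlinarith
    rw [abs_of_neg h3, abs_of_pos h2'] at *
    rw [abs_of_pos]
    · ring
    · nlinarith [mul_nonneg (by linarith : (0:ℝ) ≤ (cfA α (m+3):ℝ) - ((j:ℝ)+1))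
        (by linarith : (0:ℝ) ≤ -E α (m+3))]
  · have h2' : E α (m+2) < 0 := by nlinarith
    rw [abs_of_pos h3, abs_of_neg h2'] at *
    rw [abs_of_neg]
    · ring
    · nlinarith [mul_nonneg (by linarith : (0:ℝ) ≤ (cfA α (m+3):ℝ) - ((j:ℝ)+1))
        (by linarith : (0:ℝ) ≤ E α (m+3))]

lemma witness_ne {α : ℝ} (hα : Irrational α) (m : ℕ) (j : ℤ) (hj1 : 1 ≤ j)
    (hja : j ≤ cfA α (m+3) - 1) (k : ℕ) :
    (((cfP α (m+2) + j * cfP α (m+3)) : ℤ):ℝ)/(((cfQ α (m+2) + j * cfQ α (m+3)) : ℤ):ℝ)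
      ≠ (cfNum α k : ℝ)/(cfDen α k : ℝ) := by
  intro heq
  set P : ℤ := cfP α (m+2) + j * cfP α (m+3) with hP
  set Q : ℤ := cfQ α (m+2) + j * cfQ α (m+3) with hQ
  have hQ1 : 1 ≤ cfQ α (m+2) := cfQ_ge_one hα (m+1)
  have hQ2 : 1 ≤ cfQ α (m+3) := cfQ_ge_one hα (m+2)
  have hQpos : 0 < Q := by
    rw [hQ]; nlinarith [mul_le_mul_of_nonneg_right hj1 (by omega : (0:ℤ) ≤ cfQ α (m+3))]
  have hQk : 1 ≤ cfQ α (k+1) := cfQ_ge_one hα k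
  have hQR : ((Q:ℤ):ℝ) ≠ 0 := by exact_mod_cast (by omega : Q ≠ 0)
  have hQkR : ((cfQ α (k+1) : ℤ):ℝ) ≠ 0 := by exact_mod_cast (by omega : cfQ α (k+1) ≠ 0)
  have heq' : ((P:ℤ):ℝ)/((Q:ℤ):ℝ) = ((cfP α (k+1) : ℤ):ℝ)/((cfQ α (k+1) : ℤ):ℝ) := heq
  have hcross : P * cfQ α (k+1) = cfP α (k+1) * Q := by
    have h := (div_eq_div_iff hQR hQkR).mp heq'
    exact_mod_cast h
  -- coprimality of (P, Q)
  have hdd := det_sq α (m+2)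
  have hcop : IsCoprime P Q := by
    refine ⟨-(cfP α (m+3) * cfQ α (m+2) - cfP α (m+2) * cfQ α (m+3)) * cfQ α (m+3),
      (cfP α (m+3) * cfQ α (m+2) - cfP α (m+2) * cfQ α (m+3)) * cfP α (m+3), ?_⟩
    rw [hP, hQ]
    linear_combination hdd
  have hcopk : IsCoprime (cfP α (k+1)) (cfQ α (k+1)) := copr α k
  -- Q = cfQ α (k+1)
  have hd1 : Q ∣ cfQ α (k+1) := by
    have h : Q ∣ P * cfQ α (k+1) := ⟨cfP α (k+1), by linarith [hcross]⟩
    exact (hcop.symm).dvd_of_dvd_mul_left h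
  have hd2 : cfQ α (k+1) ∣ Q := by
    have h : cfQ α (k+1) ∣ cfP α (k+1) * Q := ⟨P, by linarith [hcross]⟩
    exact (hcopk.symm).dvd_of_dvd_mul_left h
  have hQeq : Q = cfQ α (k+1) := Int.dvd_antisymm (by omega) (by omega) hd1 hd2
  -- size contradiction
  have hrec4 : cfQ α (m+4) = cfA α (m+3) * cfQ α (m+3) + cfQ α (m+2) := cfQ_rec α (m+2)
  have hup : Q < cfQ α (m+4) := by
    rw [hrec4, hQ]
    nlinarith [mul_le_mul_of_nonneg_right (by omega : j ≤ cfA α (m+3) - 1)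
      (by omega : (0:ℤ) ≤ cfQ α (m+3))]
  have hlo : cfQ α (m+3) < Q := by
    rw [hQ]
    nlinarith [mul_le_mul_of_nonneg_right hj1 (by omega : (0:ℤ) ≤ cfQ α (m+3))]
  rcases le_or_gt (k+1) (m+3) with hk | hk
  · have h2 : cfQ α (k+1) ≤ cfQ α (m+3) := cfQ_mono hα (by omega : k ≤ m+2)
    omega
  · have h2 : cfQ α (m+4) ≤ cfQ α (k+1) := cfQ_mono hα (by omega : m+3 ≤ k)
    omega

/-- The set appearing in `psi2sFn`. -/
def SS (α t : ℝ) : Set ℝ :=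
  {x : ℝ | ∃ p q : ℤ, 1 ≤ q ∧ (q : ℝ) ≤ t ∧
    (∀ n : ℕ, (p : ℝ) / (q : ℝ) ≠ (cfNum α n : ℝ) / (cfDen α n : ℝ)) ∧
    x = |(q : ℝ) * α - (p : ℝ)|}

lemma psi2sFn_eq (α t : ℝ) : psi2sFn α t = sInf (SS α t) := rfl

lemma SS_bdd (α t : ℝ) : BddBelow (SS α t) := by
  refine ⟨0, ?_⟩
  rintro x ⟨p, q, _, _, _, rfl⟩
  exact abs_nonneg _

lemma two_one_ne {α : ℝ} (hα : Irrational α) (h0 : 0 < α) (h1 : α < 1) (k : ℕ) :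
    ((2:ℤ):ℝ)/((1:ℤ):ℝ) ≠ (cfNum α k : ℝ)/(cfDen α k : ℝ) := by
  intro heq
  have hQk : 1 ≤ cfQ α (k+1) := cfQ_ge_one hα k
  have hQkR : (0:ℝ) < ((cfQ α (k+1) : ℤ):ℝ) := by exact_mod_cast (by omega : (0:ℤ) < cfQ α (k+1))
  have heq2 : ((cfNum α k : ℤ):ℝ) / ((cfDen α k : ℤ):ℝ) = (2:ℝ) := by
    rw [← heq]; norm_num
  have hQkR' : ((cfDen α k : ℤ):ℝ) ≠ 0 := hQkR.ne'
  rw [div_eq_iff hQkR'] at heq2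
  have hP : ((cfP α (k+1) : ℤ) : ℝ) = 2 * ((cfQ α (k+1) : ℤ) : ℝ) := heq2
  have hE := E_abs_lt_one hα k
  unfold E at hE
  rw [hP] at hE
  have h3 : (cfQ α (k+1) : ℝ) * α - 2 * (cfQ α (k+1) : ℝ) = ((cfQ α (k+1) : ℝ)) * (α - 2) := by ring
  rw [h3, abs_mul, abs_of_pos hQkR, abs_of_neg (by linarith : α - (2:ℝ) < 0)] at hE
  have hQkR1 : (1:ℝ) ≤ ((cfQ α (k+1) : ℤ):ℝ) := by exact_mod_cast hQk
  nlinarith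

lemma SS_nonempty {α : ℝ} (hα : Irrational α) (h0 : 0 < α) (h1 : α < 1) {t : ℝ} (ht : 1 ≤ t) :
    (SS α t).Nonempty := by
  refine ⟨|((1:ℤ):ℝ) * α - ((2:ℤ):ℝ)|, 2, 1, le_refl _, by exact_mod_cast ht, ?_, rfl⟩
  exact fun k => two_one_ne hα h0 h1 k

lemma psi_lb {α : ℝ} (hα : Irrational α) (h0 : 0 < α) (h1 : α < 1) (m : ℕ) (j : ℤ)
    (hj0 : 0 ≤ j) (hja : j ≤ cfA α (m+3) - 1) (t : ℝ) (ht1 : 1 ≤ t)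
    (ht2 : t < (((cfQ α (m+2) + (j+1) * cfQ α (m+3)) : ℤ):ℝ)) :
    cfXi α (m+1) - (j:ℝ) * cfXi α (m+2) ≤ psi2sFn α t := by
  rw [psi2sFn_eq]
  apply le_csInf (SS_nonempty hα h0 h1 ht1)
  rintro x ⟨p, q, hq1, hqt, hne, rfl⟩
  have hqlt : q < cfQ α (m+2) + (j+1) * cfQ α (m+3) := by
    exact_mod_cast lt_of_le_of_lt hqt ht2
  exact key_lb hα m j hj0 hja p q hq1 hqlt hne

lemma psi_eval {α : ℝ} (hα : Irrational α) (h0 : 0 < α) (h1 : α < 1) (m : ℕ) (j : ℤ)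
    (hj1 : 1 ≤ j) (hja : j ≤ cfA α (m+3) - 1) (t : ℝ)
    (ht1 : (((cfQ α (m+2) + j * cfQ α (m+3)) : ℤ):ℝ) ≤ t)
    (ht2 : t < (((cfQ α (m+2) + (j+1) * cfQ α (m+3)) : ℤ):ℝ)) :
    psi2sFn α t = cfXi α (m+1) - (j:ℝ) * cfXi α (m+2) := by
  have hQ1 : 1 ≤ cfQ α (m+2) := cfQ_ge_one hα (m+1)
  have hQ2 : 1 ≤ cfQ α (m+3) := cfQ_ge_one hα (m+2)
  have hQmem : (1:ℤ) ≤ cfQ α (m+2) + j * cfQ α (m+3) := by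
    nlinarith [mul_le_mul_of_nonneg_right hj1 (by omega : (0:ℤ) ≤ cfQ α (m+3))]
  have ht1' : (1:ℝ) ≤ t := le_trans (by exact_mod_cast hQmem) ht1
  apply le_antisymm
  · rw [psi2sFn_eq]
    apply csInf_le (SS_bdd α t)
    exact ⟨cfP α (m+2) + j * cfP α (m+3), cfQ α (m+2) + j * cfQ α (m+3),
      hQmem, ht1, fun k => witness_ne hα m j hj1 hja k, (witness_val hα m j (by omega) hja).symm⟩
  · exact psi_lb hα h0 h1 m j (by omega) hja t ht1' ht2

lemma xi_pos {α : ℝ} (hα : Irrational α) (k : ℕ) : 0 < cfXi α k := by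
  rw [cfXi_eq]
  exact abs_pos.mpr (E_ne hα (k+1))

lemma mem_X {α : ℝ} (hα : Irrational α) (h0 : 0 < α) (h1 : α < 1) (m : ℕ) (j : ℤ)
    (hj1 : 1 ≤ j) (hja : j ≤ cfA α (m+3) - 1) :
    (cfQ α (m+2) + j * cfQ α (m+3)) ∈ XSet α := by
  have hQ1 : 1 ≤ cfQ α (m+2) := cfQ_ge_one hα (m+1)
  have hQ2 : 1 ≤ cfQ α (m+3) := cfQ_ge_one hα (m+2)
  have hjQ : cfQ α (m+3) ≤ j * cfQ α (m+3) :=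
    le_mul_of_one_le_left (by omega) hj1
  set Q : ℤ := cfQ α (m+2) + j * cfQ α (m+3) with hQdef
  have hQ2' : 2 ≤ Q := by omega
  refine ⟨by omega, ?_⟩
  intro hcont
  have hev : psi2sFn α ((Q:ℤ):ℝ) = cfXi α (m+1) - (j:ℝ) * cfXi α (m+2) := by
    apply psi_eval hα h0 h1 m j hj1 hja
    · exact le_refl _
    · have : Q < cfQ α (m+2) + (j+1) * cfQ α (m+3) := by rw [hQdef]; nlinarith
      exact_mod_cast this
  have htend : Tendsto (psi2sFn α) (nhdsWithin ((Q:ℤ):ℝ) (Iio ((Q:ℤ):ℝ)))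
      (nhds (cfXi α (m+1) - (j:ℝ) * cfXi α (m+2))) := by
    rw [← hev]
    exact hcont.tendsto.mono_left nhdsWithin_le_nhds
  have hev2 : ∀ᶠ s in nhdsWithin ((Q:ℤ):ℝ) (Iio ((Q:ℤ):ℝ)),
      cfXi α (m+1) - ((j:ℝ)-1) * cfXi α (m+2) ≤ psi2sFn α s := by
    filter_upwards [Ioo_mem_nhdsLT_of_mem (⟨by linarith, le_refl _⟩ :
      ((Q:ℤ):ℝ) ∈ Set.Ioc (((Q:ℤ):ℝ) - 1) ((Q:ℤ):ℝ))] with s hs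
    have hQR : (2:ℝ) ≤ ((Q:ℤ):ℝ) := by exact_mod_cast hQ2'
    have hcast : (((cfQ α (m+2) + ((j-1)+1) * cfQ α (m+3)) : ℤ):ℝ) = ((Q:ℤ):ℝ) := by
      rw [hQdef]; push_cast; ring
    have := psi_lb hα h0 h1 m (j-1) (by omega) (by omega) s
      (by linarith [hs.1]) (by rw [hcast]; exact hs.2)
    convert this using 2
    push_cast
    ring
  have hle := ge_of_tendsto htend hev2
  have hxi := xi_pos hα (m+2)
  nlinarith

lemma cont_at {α : ℝ} (hα : Irrational α) (h0 : 0 < α) (h1 : α < 1) (m : ℕ) (j : ℤ)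
    (hj1 : 1 ≤ j) (hja : j + 1 ≤ cfA α (m+3) - 1) (z : ℤ)
    (hz1 : cfQ α (m+2) + j * cfQ α (m+3) < z)
    (hz2 : z < cfQ α (m+2) + (j+1) * cfQ α (m+3)) :
    ContinuousAt (psi2sFn α) ((z:ℤ):ℝ) := by
  apply Filter.EventuallyEq.continuousAt (y := cfXi α (m+1) - (j:ℝ) * cfXi α (m+2))
  have h1R : (((cfQ α (m+2) + j * cfQ α (m+3)) : ℤ):ℝ) < ((z:ℤ):ℝ) := by exact_mod_cast hz1
  have h2R : ((z:ℤ):ℝ) < (((cfQ α (m+2) + (j+1) * cfQ α (m+3)) : ℤ):ℝ) := by exact_mod_cast hz2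
  filter_upwards [Ioo_mem_nhds h1R h2R] with s hs
  exact psi_eval hα h0 h1 m j hj1 (by omega) s hs.1.le hs.2

end Stmt16Aux

lemma list_convert (K : ℕ) (c d : ℤ) :
    ((List.range K).map (fun j => c + ((j : ℤ) + 1) * d))
      = List.map (fun i : ℕ => c + ((i:ℤ) + 1) * d) (List.range K) := by
  induction K with
  | zero => rfl
  | succ n ih => rw [List.range_succ]; simp_all




open Stmt16Aux in
/-- Let `α ∈ (0,1)` be irrational, `n ≥ 3` and `aₙ ≥ 2`. Then the
`aₙ − 1` numbers `q_{n-2} + j·q_{n-1}`, `j = 1, …, aₙ − 1`, are `aₙ − 1` successive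
elements of `𝔛(α)`. -/
theorem stmt16 (α : ℝ) (hα : Irrational α) (h0 : 0 < α) (h1 : α < 1)
    (n : ℕ) (hn : 3 ≤ n) (ha : 2 ≤ cfA α n) :
    SuccessiveIn (XSet α)
      ((List.range ((cfA α n).toNat - 1)).map
        (fun j => cfDen α (n - 2) + ((j : ℤ) + 1) * cfDen α (n - 1))) := by

  obtain ⟨m, rfl⟩ : ∃ m, n = m + 3 := ⟨n - 3, by omega⟩
  have ha' : 2 ≤ cfA α (m+3) := ha
  have hQ1 : 1 ≤ cfQ α (m+2) := cfQ_ge_one hα (m+1)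
  have hQ2 : 1 ≤ cfQ α (m+3) := cfQ_ge_one hα (m+2)
  have hden1 : cfDen α (m+3-2) = cfQ α (m+2) := rfl
  have hden2 : cfDen α (m+3-1) = cfQ α (m+3) := rfl
  rw [list_convert]
  simp only [hden1, hden2]
  constructor
  · intro x hx
    rw [List.mem_map] at hx
    obtain ⟨i, hi, rfl⟩ := hx
    rw [List.mem_range] at hi
    exact mem_X hα h0 h1 m ((i:ℤ)+1) (by omega) (by omega)
  · simp only [List.Chain']; rw [List.isChain_map]
    cases hK : ((cfA α (m+3)).toNat - 1) with
    | zero => simp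
    | succ K =>
      rw [List.isChain_range_succ]
      intro i hi
      constructor
      · push_cast
        nlinarith [hQ2]
      · rintro z ⟨hzpos, hznc⟩ ⟨hz1, hz2⟩
        apply hznc
        have hcast2 : z < cfQ α (m+2) + (((i:ℤ)+1)+1) * cfQ α (m+3) := by
          push_cast at hz2 ⊢
          linarith
        exact cont_at hα h0 h1 m ((i:ℤ)+1) (by omega) (by omega) z hz1 hcast2
end

section
/- Let n ≥ 3 and suppose a_n ≥ 2 and a_{n+1} ≥ 2. Then q_n − q_{n-1} and q_n + q_{n-1} are two successive elements of 𝔛(α). -/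
open Filter Real Set

open Topology

namespace Stmt17
variable {α : ℝ}

lemma gauss_irr (hα : Irrational α) : ∀ k, Irrational (gaussIter α k)
  | 0 => hα
  | (k+1) => by
      have ih := gauss_irr hα k
      have h2 : Irrational (Int.fract (gaussIter α k)) := by
        have := ih.sub_intCast ⌊gaussIter α k⌋
        rwa [show gaussIter α k - (⌊gaussIter α k⌋:ℝ) = Int.fract (gaussIter α k) from rfl] at this
      simpa [gaussIter] using h2.inv

lemma fract_gauss_pos (hα : Irrational α) (k : ℕ) : 0 < Int.fract (gaussIter α k) := by
  rcases lt_or_eq_of_le (Int.fract_nonneg (gaussIter α k)) with h | h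
  · exact h
  · exfalso
    have := gauss_irr hα k
    have : Irrational (Int.fract (gaussIter α k)) := by
      have h3 := this.sub_intCast ⌊gaussIter α k⌋
      rwa [show gaussIter α k - (⌊gaussIter α k⌋:ℝ) = Int.fract (gaussIter α k) from rfl] at h3
    rw [← h] at this
    exact this ⟨0, by norm_num⟩

lemma gauss_one_lt (hα : Irrational α) (k : ℕ) : 1 < gaussIter α (k+1) := by
  have h1 : Int.fract (gaussIter α k) < 1 := Int.fract_lt_one _
  have h0 : 0 < Int.fract (gaussIter α k) := fract_gauss_pos hα k
  rw [gaussIter]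
  exact (one_lt_inv_iff₀).2 ⟨h0, h1⟩

lemma cfA_one_le (hα : Irrational α) (k : ℕ) : 1 ≤ cfA α (k+1) := by
  have := gauss_one_lt hα k
  have : (1:ℝ) ≤ ⌊gaussIter α (k+1)⌋ := by
    rw [show ((1:ℝ)) = ((1:ℤ):ℝ) by norm_num]
    exact_mod_cast Int.le_floor.2 (by exact_mod_cast this.le)
  exact_mod_cast this

noncomputable def thF (α : ℝ) (k : ℕ) : ℝ := (cfQ α k : ℝ) * α - (cfP α k : ℝ)

lemma thF_rec (k : ℕ) : thF α (k+2) = (cfA α (k+1) : ℝ) * thF α (k+1) + thF α k := by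
  simp only [thF, cfQ, cfP]
  push_cast
  ring

lemma thF_succ (hα : Irrational α) : ∀ k, thF α (k+1) = -(thF α k) * Int.fract (gaussIter α k)
  | 0 => by
      show thF α 1 = -(thF α 0) * Int.fract (gaussIter α 0)
      rw [show Int.fract (gaussIter α 0) = α - (⌊α⌋:ℝ) from rfl]
      simp [thF, cfQ, cfP]
  | (k+1) => by
      have ih := thF_succ hα k
      have hf : Int.fract (gaussIter α k) ≠ 0 := (fract_gauss_pos hα k).ne'
      have hfr : Int.fract (gaussIter α (k+1)) = (Int.fract (gaussIter α k))⁻¹ - (cfA α (k+1) : ℝ) := by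
        rw [Int.fract, cfA]; rfl
      rw [thF_rec, hfr, ih]
      field_simp
      ring

lemma thF_ne (hα : Irrational α) : ∀ k, thF α k ≠ 0
  | 0 => by norm_num [thF, cfQ, cfP]
  | (k+1) => by
      rw [thF_succ hα k]
      exact mul_ne_zero (neg_ne_zero.2 (thF_ne hα k)) (fract_gauss_pos hα k).ne'

lemma thF_mul_neg (hα : Irrational α) (k : ℕ) : thF α (k+1) * thF α k < 0 := by
  rw [thF_succ hα k]
  have h0 := fract_gauss_pos hα k
  have hne := thF_ne hα k
  rcases hne.lt_or_gt with h | h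
  · nlinarith [mul_pos h0 (mul_pos_of_neg_of_neg h h)]
  · nlinarith [mul_pos h0 (mul_pos h h)]

lemma thF_abs_lt (hα : Irrational α) (k : ℕ) : |thF α (k+1)| < |thF α k| := by
  rw [thF_succ hα k, abs_mul, abs_neg]
  have h0 := fract_gauss_pos hα k
  have h1 := Int.fract_lt_one (gaussIter α k)
  have := abs_pos.2 (thF_ne hα k)
  calc |thF α k| * |Int.fract (gaussIter α k)| < |thF α k| * 1 := by
        rw [abs_of_pos h0]; exact mul_lt_mul_of_pos_left h1 this
    _ = |thF α k| := mul_one _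


lemma cfQ_nonneg (hα : Irrational α) : ∀ k, 0 ≤ cfQ α k
  | 0 => le_refl _
  | 1 => by norm_num [cfQ]
  | (k+2) => by
      have h1 := cfQ_nonneg hα (k+1)
      have h0 := cfQ_nonneg hα k
      have hA := cfA_one_le hα k
      show 0 ≤ cfA α (k+1) * cfQ α (k+1) + cfQ α k
      nlinarith

lemma cfQ_one_le (hα : Irrational α) : ∀ k, 1 ≤ cfQ α (k+1)
  | 0 => by norm_num [cfQ]
  | (k+1) => by
      have h1 := cfQ_one_le hα k
      have h0 := cfQ_nonneg hα k
      have hA := cfA_one_le hα k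
      show 1 ≤ cfA α (k+1) * cfQ α (k+1) + cfQ α k
      nlinarith

lemma cfQ_mono_succ (hα : Irrational α) (k : ℕ) : cfQ α (k+1) ≤ cfQ α (k+2) := by
  have h1 := cfQ_one_le hα k
  have h0 := cfQ_nonneg hα k
  have hA := cfA_one_le hα k
  show cfQ α (k+1) ≤ cfA α (k+1) * cfQ α (k+1) + cfQ α k
  nlinarith

lemma cfQ_strict (hα : Irrational α) (k : ℕ) : cfQ α (k+2) < cfQ α (k+3) := by
  have h1 := cfQ_one_le hα (k+1)
  have h0 := cfQ_one_le hα k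
  have hA := cfA_one_le hα (k+1)
  show cfQ α (k+2) < cfA α (k+2) * cfQ α (k+2) + cfQ α (k+1)
  nlinarith

lemma cfQ_le_of_le (hα : Irrational α) {j k : ℕ} (h : j ≤ k) : cfQ α j ≤ cfQ α k := by
  induction k with
  | zero => simp_all
  | succ k ih =>
    rcases Nat.lt_or_ge j (k+1) with h' | h'
    · have := ih (by omega)
      refine this.trans ?_
      cases k with
      | zero => norm_num [cfQ]
      | succ k => exact cfQ_mono_succ hα k
    · have : j = k+1 := by omega
      simp [this]

lemma detP (hα : Irrational α) : ∀ k, cfP α (k+1) * cfQ α k - cfP α k * cfQ α (k+1) = (-1)^(k+1)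
  | 0 => by norm_num [cfP, cfQ]
  | (k+1) => by
      have ih := detP hα k
      show (cfA α (k+1) * cfP α (k+1) + cfP α k) * cfQ α (k+1)
          - cfP α (k+1) * (cfA α (k+1) * cfQ α (k+1) + cfQ α k) = (-1)^(k+2)
      have : (-1:ℤ)^(k+2) = -(-1)^(k+1) := by ring
      rw [this, ← ih]; ring

lemma decomp (hα : Irrational α) (j : ℕ) (p q : ℤ) :
    ∃ x y : ℤ, q = x * cfQ α (j+1) + y * cfQ α j ∧ p = x * cfP α (j+1) + y * cfP α j := by
  set e : ℤ := cfP α (j+1) * cfQ α j - cfP α j * cfQ α (j+1) with he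
  have hee : e * e = 1 := by
    rw [he, detP hα j, ← pow_add]
    exact Even.neg_one_pow ⟨j+1, by ring⟩
  refine ⟨e * (cfQ α j * p - cfP α j * q), e * (cfP α (j+1) * q - cfQ α (j+1) * p), ?_, ?_⟩
  · have : e * (cfQ α j * p - cfP α j * q) * cfQ α (j+1) + e * (cfP α (j+1) * q - cfQ α (j+1) * p) * cfQ α j
        = (e * e) * q := by rw [he]; ring
    rw [this, hee, one_mul]
  · have : e * (cfQ α j * p - cfP α j * q) * cfP α (j+1) + e * (cfP α (j+1) * q - cfQ α (j+1) * p) * cfP α j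
        = (e * e) * p := by rw [he]; ring
    rw [this, hee, one_mul]

lemma val_eq (j : ℕ) (p q x y : ℤ) (hq : q = x * cfQ α (j+1) + y * cfQ α j)
    (hp : p = x * cfP α (j+1) + y * cfP α j) :
    (q:ℝ) * α - (p:ℝ) = (x:ℝ) * thF α (j+1) + (y:ℝ) * thF α j := by
  simp only [thF]
  rw [hq, hp]
  push_cast
  ring

lemma key_ineq {u v : ℝ} (h : u * v < 0) {x y a b : ℝ} (ha : 0 ≤ a) (hb : 0 ≤ b)
    (hx : a ≤ x) (hy : y ≤ -b) : a * |u| + b * |v| ≤ |x * u + y * v| := by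
  rcases lt_or_gt_of_ne (fun h0 : u = 0 => by simp [h0] at h) with hu | hu
  · have hv : 0 < v := by nlinarith
    rw [abs_of_neg hu, abs_of_pos hv]
    calc a * -u + b * v ≤ -(x * u + y * v) := by nlinarith
      _ ≤ |x * u + y * v| := neg_le_abs _
  · have hv : v < 0 := by nlinarith
    rw [abs_of_pos hu, abs_of_neg hv]
    calc a * u + b * -v ≤ x * u + y * v := by nlinarith
      _ ≤ |x * u + y * v| := le_abs_self _

lemma key_ineq' {u v : ℝ} (h : u * v < 0) {x y a b : ℝ} (ha : 0 ≤ a) (hb : 0 ≤ b)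
    (hx : x ≤ -a) (hy : b ≤ y) : a * |u| + b * |v| ≤ |x * u + y * v| := by
  have := key_ineq (u := v) (v := u) (x := y) (y := x) (a := b) (b := a) (by nlinarith) hb ha hy (by linarith)
  calc a * |u| + b * |v| = b * |v| + a * |u| := by ring
    _ ≤ |y * v + x * u| := this
    _ = |x * u + y * v| := by rw [add_comm]

lemma abs_sub_opp {u v : ℝ} (h : u * v < 0) : |u - v| = |u| + |v| := by
  rcases lt_or_gt_of_ne (fun h0 : u = 0 => by simp [h0] at h) with hu | hu
  · have hv : 0 < v := by nlinarith
    rw [abs_of_neg hu, abs_of_pos hv, abs_of_neg (by linarith)]; ring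
  · have hv : v < 0 := by nlinarith
    rw [abs_of_pos hu, abs_of_neg hv, abs_of_pos (by linarith)]; ring

lemma abs_add_opp {u v : ℝ} (h : u * v < 0) (hlt : |u| < |v|) : |u + v| = |v| - |u| := by
  rcases lt_or_gt_of_ne (fun h0 : u = 0 => by simp [h0] at h) with hu | hu
  · have hv : 0 < v := by nlinarith
    rw [abs_of_neg hu, abs_of_pos hv] at hlt
    rw [abs_of_neg hu, abs_of_pos hv, abs_of_pos (by linarith)]; ring
  · have hv : v < 0 := by nlinarith
    rw [abs_of_pos hu, abs_of_neg hv] at hlt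
    rw [abs_of_pos hu, abs_of_neg hv, abs_of_neg (by linarith)]; ring

lemma coprime_PQ (hα : Irrational α) (k : ℕ) : IsCoprime (cfP α (k+1)) (cfQ α (k+1)) := by
  refine ⟨(-1)^(k+1) * cfQ α k, -((-1)^(k+1)) * cfP α k, ?_⟩
  have h := detP hα k
  have h2 : ((-1:ℤ)^(k+1)) * ((-1)^(k+1)) = 1 := by
    rw [← pow_add]; exact Even.neg_one_pow ⟨k+1, by ring⟩
  calc (-1)^(k+1) * cfQ α k * cfP α (k+1) + -((-1)^(k+1)) * cfP α k * cfQ α (k+1)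
      = ((-1:ℤ)^(k+1)) * (cfP α (k+1) * cfQ α k - cfP α k * cfQ α (k+1)) := by ring
    _ = 1 := by rw [h, h2]

lemma ratio_ne (hα : Irrational α) (p q : ℤ) (hq : 1 ≤ q) (hcop : IsCoprime p q)
    (hne : ∀ k : ℕ, q ≠ cfDen α k) (k : ℕ) :
    (p:ℝ)/(q:ℝ) ≠ (cfNum α k : ℝ)/(cfDen α k : ℝ) := by
  intro h
  have hQ1 : 1 ≤ cfQ α (k+1) := cfQ_one_le hα k
  have hq0 : (q:ℝ) ≠ 0 := by exact_mod_cast (by omega : q ≠ 0)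
  have hQ0 : ((cfDen α k : ℤ):ℝ) ≠ 0 := by
    have : cfDen α k ≠ 0 := by simp only [cfDen]; omega
    exact_mod_cast this
  rw [div_eq_div_iff hq0 hQ0] at h
  have hZ : p * cfDen α k = cfNum α k * q := by exact_mod_cast h
  have hdvd1 : q ∣ cfDen α k := by
    have : q ∣ p * cfDen α k := ⟨cfNum α k, by linarith [hZ]⟩
    exact (hcop.symm).dvd_of_dvd_mul_left this
  have hdvd2 : cfDen α k ∣ q := by
    have : cfDen α k ∣ cfNum α k * q := ⟨p, by linarith [hZ]⟩
    exact ((coprime_PQ hα k).symm.dvd_of_dvd_mul_left (by simpa [cfNum, cfDen] using this))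
  have : q = cfDen α k := Int.dvd_antisymm (by omega) (by simp only [cfDen]; omega) hdvd1 hdvd2
  exact hne k this

lemma LB (hα : Irrational α) (j : ℕ) (p q : ℤ) (h1 : 1 ≤ q)
    (hr : ∀ k : ℕ, (p:ℝ)/(q:ℝ) ≠ (cfNum α k : ℝ)/(cfDen α k : ℝ))
    (hq : q < cfQ α (j+3) + cfQ α (j+2)) :
    (|thF α (j+3)| + |thF α (j+2)| ≤ |(q:ℝ) * α - (p:ℝ)|) ∧
    (q < cfQ α (j+3) - cfQ α (j+2) → 2*|thF α (j+3)| + |thF α (j+2)| ≤ |(q:ℝ) * α - (p:ℝ)|) := by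
  obtain ⟨x, y, hqd0, hpd0⟩ := decomp hα (j+2) p q
  have hqd : q = x * cfQ α (j+3) + y * cfQ α (j+2) := hqd0
  have hpd : p = x * cfP α (j+3) + y * cfP α (j+2) := hpd0
  have hval : (q:ℝ) * α - (p:ℝ) = (x:ℝ) * thF α (j+3) + (y:ℝ) * thF α (j+2) :=
    val_eq (j+2) p q x y hqd0 hpd0
  set u := thF α (j+3) with hu
  set v := thF α (j+2) with hv
  have huv : u * v < 0 := thF_mul_neg hα (j+2)
  have habs : |u| < |v| := thF_abs_lt hα (j+2)
  have hQ1 : 1 ≤ cfQ α (j+2) := cfQ_one_le hα (j+1)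
  have hQ2 : 1 ≤ cfQ α (j+3) := cfQ_one_le hα (j+2)
  have hQlt : cfQ α (j+2) < cfQ α (j+3) := cfQ_strict hα j
  rcases lt_trichotomy x 0 with hx | hx | hx
  · -- x < 0
    rcases lt_trichotomy y 0 with hy | hy | hy
    · exfalso; nlinarith
    · exfalso; rw [hy] at hqd; nlinarith
    · -- x < 0, y > 0
      constructor
      · have := key_ineq' (u := u) (v := v) (x := (x:ℝ)) (y := (y:ℝ)) (a := 1) (b := 1)
          huv zero_le_one zero_le_one (by exact_mod_cast (show x ≤ -1 by omega) : ((x:ℝ) ≤ -1)) (by exact_mod_cast hy)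
        rw [hval]; linarith
      · intro _
        rcases eq_or_lt_of_le (by omega : (1:ℤ) ≤ y) with hy1 | hy2
        · exfalso; rw [← hy1] at hqd; nlinarith
        · have := key_ineq' (u := u) (v := v) (x := (x:ℝ)) (y := (y:ℝ)) (a := 1) (b := 2)
            huv zero_le_one (by norm_num) (by exact_mod_cast (show x ≤ -1 by omega) : ((x:ℝ) ≤ -1)) (by exact_mod_cast hy2)
          rw [hval]; linarith
  · -- x = 0
    exfalso
    have hy : 1 ≤ y := by
      rcases le_or_gt 1 y with h | h
      · exact h
      · exfalso; rw [hx] at hqd; nlinarith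
    refine hr (j+1) ?_
    have hy0 : ((y:ℤ):ℝ) ≠ 0 := by exact_mod_cast (by omega : y ≠ 0)
    rw [hx] at hqd hpd
    simp only [zero_mul, zero_add] at hqd hpd
    rw [hqd, hpd]
    show ((y * cfP α (j+2) : ℤ):ℝ) / ((y * cfQ α (j+2) : ℤ):ℝ) = _
    push_cast
    rw [mul_comm (y:ℝ) _, mul_comm (y:ℝ) _, mul_div_mul_right _ _ hy0]
    simp [cfNum, cfDen]
  · -- x > 0
    rcases lt_trichotomy y 0 with hy | hy | hy
    · -- x > 0, y < 0
      constructor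
      · have := key_ineq (u := u) (v := v) (x := (x:ℝ)) (y := (y:ℝ)) (a := 1) (b := 1)
          huv zero_le_one zero_le_one (by exact_mod_cast (show (1:ℤ) ≤ x by omega) : ((1:ℝ) ≤ (x:ℝ))) (by exact_mod_cast (show y ≤ -1 by omega) : ((y:ℝ) ≤ -1))
        rw [hval]; linarith
      · intro hq2
        by_cases hxy : x = 1 ∧ y = -1
        · exfalso
          rw [hxy.1, hxy.2] at hqd
          omega
        · have : 2 ≤ x ∨ y ≤ -2 := by omega
          rcases this with h2 | h2
          · have := key_ineq (u := u) (v := v) (x := (x:ℝ)) (y := (y:ℝ)) (a := 2) (b := 1)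
              huv (by norm_num) zero_le_one (by exact_mod_cast h2) (by exact_mod_cast (show y ≤ -1 by omega) : ((y:ℝ) ≤ -1))
            rw [hval]; linarith
          · have := key_ineq (u := u) (v := v) (x := (x:ℝ)) (y := (y:ℝ)) (a := 1) (b := 2)
              huv zero_le_one (by norm_num) (by exact_mod_cast (show (1:ℤ) ≤ x by omega) : ((1:ℝ) ≤ (x:ℝ))) (by exact_mod_cast h2)
            rw [hval]; linarith
    · -- y = 0
      exfalso
      refine hr (j+2) ?_
      have hx0 : ((x:ℤ):ℝ) ≠ 0 := by exact_mod_cast (by omega : x ≠ 0)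
      rw [hy] at hqd hpd
      simp only [zero_mul, add_zero] at hqd hpd
      rw [hqd, hpd]
      show ((x * cfP α (j+3) : ℤ):ℝ) / ((x * cfQ α (j+3) : ℤ):ℝ) = _
      push_cast
      rw [mul_comm (x:ℝ) _, mul_comm (x:ℝ) _, mul_div_mul_right _ _ hx0]
      simp [cfNum, cfDen]
    · -- x > 0, y > 0
      exfalso; nlinarith

lemma coprime_pair1 (hα : Irrational α) (j : ℕ) :
    IsCoprime (cfP α (j+3) - cfP α (j+2)) (cfQ α (j+3) - cfQ α (j+2)) := by
  refine ⟨(-1)^(j+3) * cfQ α (j+3), -((-1)^(j+3)) * cfP α (j+3), ?_⟩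
  have h : cfP α (j+3) * cfQ α (j+2) - cfP α (j+2) * cfQ α (j+3) = (-1)^(j+3) := detP hα (j+2)
  have h2 : ((-1:ℤ)^(j+3)) * ((-1)^(j+3)) = 1 := by
    rw [← pow_add]; exact Even.neg_one_pow ⟨j+3, by ring⟩
  calc (-1)^(j+3) * cfQ α (j+3) * (cfP α (j+3) - cfP α (j+2))
        + -((-1)^(j+3)) * cfP α (j+3) * (cfQ α (j+3) - cfQ α (j+2))
      = ((-1:ℤ)^(j+3)) * (cfP α (j+3) * cfQ α (j+2) - cfP α (j+2) * cfQ α (j+3)) := by ring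
    _ = 1 := by rw [h, h2]

lemma coprime_pair2 (hα : Irrational α) (j : ℕ) :
    IsCoprime (cfP α (j+3) + cfP α (j+2)) (cfQ α (j+3) + cfQ α (j+2)) := by
  refine ⟨-((-1)^(j+3)) * cfQ α (j+3), (-1)^(j+3) * cfP α (j+3), ?_⟩
  have h : cfP α (j+3) * cfQ α (j+2) - cfP α (j+2) * cfQ α (j+3) = (-1)^(j+3) := detP hα (j+2)
  have h2 : ((-1:ℤ)^(j+3)) * ((-1)^(j+3)) = 1 := by
    rw [← pow_add]; exact Even.neg_one_pow ⟨j+3, by ring⟩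
  calc -((-1)^(j+3)) * cfQ α (j+3) * (cfP α (j+3) + cfP α (j+2))
        + (-1)^(j+3) * cfP α (j+3) * (cfQ α (j+3) + cfQ α (j+2))
      = ((-1:ℤ)^(j+3)) * (cfP α (j+3) * cfQ α (j+2) - cfP α (j+2) * cfQ α (j+3)) := by ring
    _ = 1 := by rw [h, h2]

lemma q1_gt (hα : Irrational α) (j : ℕ) (hA : 2 ≤ cfA α (j+2)) :
    cfQ α (j+2) < cfQ α (j+3) - cfQ α (j+2) := by
  have hrec : cfQ α (j+3) = cfA α (j+2) * cfQ α (j+2) + cfQ α (j+1) := rfl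
  have h1 := cfQ_one_le hα (j+1)
  have h0 := cfQ_one_le hα j
  nlinarith

lemma q1_lt (hα : Irrational α) (j : ℕ) : cfQ α (j+3) - cfQ α (j+2) < cfQ α (j+3) := by
  have h1 : 1 ≤ cfQ α (j+2) := cfQ_one_le hα (j+1)
  omega

lemma q2_lt (hα : Irrational α) (j : ℕ) (hA' : 2 ≤ cfA α (j+3)) :
    cfQ α (j+3) + cfQ α (j+2) < cfQ α (j+4) := by
  have hrec : cfQ α (j+4) = cfA α (j+3) * cfQ α (j+3) + cfQ α (j+2) := rfl
  have h1 : 1 ≤ cfQ α (j+3) := cfQ_one_le hα (j+2)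
  nlinarith

lemma hne1 (hα : Irrational α) (j : ℕ) (hA : 2 ≤ cfA α (j+2)) (k : ℕ) :
    cfQ α (j+3) - cfQ α (j+2) ≠ cfDen α k := by
  have hgt := q1_gt hα j hA
  have hlt := q1_lt hα j
  rcases le_or_gt (k+1) (j+2) with h | h
  · have := cfQ_le_of_le hα (j := k+1) (k := j+2) h
    simp only [cfDen]; omega
  · have := cfQ_le_of_le hα (j := j+3) (k := k+1) (by omega)
    simp only [cfDen]; omega

lemma hne2 (hα : Irrational α) (j : ℕ) (hA' : 2 ≤ cfA α (j+3)) (k : ℕ) :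
    cfQ α (j+3) + cfQ α (j+2) ≠ cfDen α k := by
  have hlt := q2_lt hα j hA'
  have h1 : 1 ≤ cfQ α (j+2) := cfQ_one_le hα (j+1)
  rcases le_or_gt (k+1) (j+3) with h | h
  · have := cfQ_le_of_le hα (j := k+1) (k := j+3) h
    simp only [cfDen]; omega
  · have := cfQ_le_of_le hα (j := j+4) (k := k+1) (by omega)
    simp only [cfDen]; omega

lemma val_pair1 (hα : Irrational α) (j : ℕ) :
    |((cfQ α (j+3) - cfQ α (j+2) : ℤ):ℝ) * α - ((cfP α (j+3) - cfP α (j+2) : ℤ):ℝ)|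
      = |thF α (j+3)| + |thF α (j+2)| := by
  have h : ((cfQ α (j+3) - cfQ α (j+2) : ℤ):ℝ) * α - ((cfP α (j+3) - cfP α (j+2) : ℤ):ℝ)
      = thF α (j+3) - thF α (j+2) := by
    simp only [thF]; push_cast; ring
  rw [h]
  exact abs_sub_opp (thF_mul_neg hα (j+2))

lemma val_pair2 (hα : Irrational α) (j : ℕ) :
    |((cfQ α (j+3) + cfQ α (j+2) : ℤ):ℝ) * α - ((cfP α (j+3) + cfP α (j+2) : ℤ):ℝ)|
      = |thF α (j+2)| - |thF α (j+3)| := by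
  have h : ((cfQ α (j+3) + cfQ α (j+2) : ℤ):ℝ) * α - ((cfP α (j+3) + cfP α (j+2) : ℤ):ℝ)
      = thF α (j+3) + thF α (j+2) := by
    simp only [thF]; push_cast; ring
  rw [h]
  exact abs_add_opp (thF_mul_neg hα (j+2)) (thF_abs_lt hα (j+2))

def Sset (α t : ℝ) : Set ℝ :=
  {x : ℝ | ∃ p q : ℤ, 1 ≤ q ∧ (q : ℝ) ≤ t ∧
    (∀ n : ℕ, (p : ℝ) / (q : ℝ) ≠ (cfNum α n : ℝ) / (cfDen α n : ℝ)) ∧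
    x = |(q : ℝ) * α - (p : ℝ)|}

lemma psi2s_eq (t : ℝ) : psi2sFn α t = sInf (Sset α t) := rfl

lemma Sset_bdd (t : ℝ) : BddBelow (Sset α t) := by
  refine ⟨0, fun x hx => ?_⟩
  obtain ⟨p, q, _, _, _, hx⟩ := hx
  rw [hx]; exact abs_nonneg _

lemma q1_one_le (hα : Irrational α) (j : ℕ) (hA : 2 ≤ cfA α (j+2)) :
    1 ≤ cfQ α (j+3) - cfQ α (j+2) := by
  have := q1_gt hα j hA
  have h1 : 1 ≤ cfQ α (j+2) := cfQ_one_le hα (j+1)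
  omega

lemma mem1 (hα : Irrational α) (j : ℕ) (hA : 2 ≤ cfA α (j+2)) {t : ℝ}
    (ht : ((cfQ α (j+3) - cfQ α (j+2) : ℤ) : ℝ) ≤ t) :
    |thF α (j+3)| + |thF α (j+2)| ∈ Sset α t := by
  refine ⟨cfP α (j+3) - cfP α (j+2), cfQ α (j+3) - cfQ α (j+2), q1_one_le hα j hA, ht, ?_, ?_⟩
  · exact ratio_ne hα _ _ (q1_one_le hα j hA) (coprime_pair1 hα j) (hne1 hα j hA)
  · exact (val_pair1 hα j).symm

lemma mem2 (hα : Irrational α) (j : ℕ) (hA' : 2 ≤ cfA α (j+3)) {t : ℝ}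
    (ht : ((cfQ α (j+3) + cfQ α (j+2) : ℤ) : ℝ) ≤ t) :
    |thF α (j+2)| - |thF α (j+3)| ∈ Sset α t := by
  have h1 : 1 ≤ cfQ α (j+2) := cfQ_one_le hα (j+1)
  have h2 : 1 ≤ cfQ α (j+3) := cfQ_one_le hα (j+2)
  refine ⟨cfP α (j+3) + cfP α (j+2), cfQ α (j+3) + cfQ α (j+2), by omega, ht, ?_, ?_⟩
  · exact ratio_ne hα _ _ (by omega) (coprime_pair2 hα j) (hne2 hα j hA')
  · exact (val_pair2 hα j).symm

lemma psi_const (hα : Irrational α) (j : ℕ) (hA : 2 ≤ cfA α (j+2)) {t : ℝ}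
    (ht1 : ((cfQ α (j+3) - cfQ α (j+2) : ℤ) : ℝ) ≤ t)
    (ht2 : t < ((cfQ α (j+3) + cfQ α (j+2) : ℤ) : ℝ)) :
    psi2sFn α t = |thF α (j+3)| + |thF α (j+2)| := by
  rw [psi2s_eq]
  refine le_antisymm (csInf_le (Sset_bdd t) (mem1 hα j hA ht1)) ?_
  refine le_csInf ⟨_, mem1 hα j hA ht1⟩ ?_
  rintro x ⟨p, q, h1, hqt, hr, rfl⟩
  have hq : q < cfQ α (j+3) + cfQ α (j+2) := by
    have : (q:ℝ) < ((cfQ α (j+3) + cfQ α (j+2) : ℤ):ℝ) := lt_of_le_of_lt hqt ht2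
    exact_mod_cast this
  exact (LB hα j p q h1 hr hq).1

lemma psi_before (hα : Irrational α) (j : ℕ) {t : ℝ}
    (ht : t < ((cfQ α (j+3) - cfQ α (j+2) : ℤ) : ℝ)) :
    psi2sFn α t = 0 ∨ 2 * |thF α (j+3)| + |thF α (j+2)| ≤ psi2sFn α t := by
  rcases eq_empty_or_nonempty (Sset α t) with h | h
  · left; rw [psi2s_eq, h]; exact Real.sInf_empty
  · right
    rw [psi2s_eq]
    refine le_csInf h ?_
    rintro x ⟨p, q, h1, hqt, hr, rfl⟩
    have hqlt : q < cfQ α (j+3) - cfQ α (j+2) := by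
      have : (q:ℝ) < ((cfQ α (j+3) - cfQ α (j+2) : ℤ):ℝ) := lt_of_le_of_lt hqt ht
      exact_mod_cast this
    have h1' : 1 ≤ cfQ α (j+2) := cfQ_one_le hα (j+1)
    exact (LB hα j p q h1 hr (by omega)).2 hqlt

lemma psi_le2 (hα : Irrational α) (j : ℕ) (hA' : 2 ≤ cfA α (j+3)) {t : ℝ}
    (ht : ((cfQ α (j+3) + cfQ α (j+2) : ℤ) : ℝ) ≤ t) :
    psi2sFn α t ≤ |thF α (j+2)| - |thF α (j+3)| := by
  rw [psi2s_eq]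
  exact csInf_le (Sset_bdd t) (mem2 hα j hA' ht)

end Stmt17

/-- Let `α ∈ (0,1)` be irrational, `n ≥ 3`, `aₙ ≥ 2` and `a_{n+1} ≥ 2`.
Then `qₙ − q_{n-1}` and `qₙ + q_{n-1}` are two successive elements of `𝔛(α)`. -/
theorem stmt17 (α : ℝ) (hα : Irrational α) (h0 : 0 < α) (h1 : α < 1)
    (n : ℕ) (hn : 3 ≤ n) (ha : 2 ≤ cfA α n) (ha' : 2 ≤ cfA α (n + 1)) :
    SuccessiveIn (XSet α)
      [cfDen α n - cfDen α (n - 1), cfDen α n + cfDen α (n - 1)] := by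
  obtain ⟨j, rfl⟩ : ∃ j, n = j + 2 := ⟨n - 2, by omega⟩
  have ha : 2 ≤ cfA α (j+2) := ha
  have ha' : 2 ≤ cfA α (j+3) := ha'
  set m : ℤ := cfQ α (j+3) - cfQ α (j+2) with hm
  set M : ℤ := cfQ α (j+3) + cfQ α (j+2) with hM
  have hgoal : cfDen α (j+2) - cfDen α (j+2-1) = m ∧ cfDen α (j+2) + cfDen α (j+2-1) = M := by
    constructor <;> rfl
  have hQ1 : 1 ≤ cfQ α (j+2) := Stmt17.cfQ_one_le hα (j+1)
  have hQ2 : 1 ≤ cfQ α (j+3) := Stmt17.cfQ_one_le hα (j+2)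
  have hm1 : 1 ≤ m := Stmt17.q1_one_le hα j ha
  have hmM : m < M := by rw [hm, hM]; omega
  have hu : 0 < |Stmt17.thF α (j+3)| := abs_pos.2 (Stmt17.thF_ne hα (j+3))
  have hv : 0 < |Stmt17.thF α (j+2)| := abs_pos.2 (Stmt17.thF_ne hα (j+2))
  have habs : |Stmt17.thF α (j+3)| < |Stmt17.thF α (j+2)| := Stmt17.thF_abs_lt hα (j+2)
  set u := |Stmt17.thF α (j+3)|
  set v := |Stmt17.thF α (j+2)|
  have hmMcast : ((m:ℤ):ℝ) < ((M:ℤ):ℝ) := by exact_mod_cast hmM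
  -- psi at m
  have hpsim : psi2sFn α ((m:ℤ):ℝ) = u + v :=
    Stmt17.psi_const hα j ha (le_refl _) hmMcast
  -- m is a discontinuity
  have hdm : ¬ ContinuousAt (psi2sFn α) ((m:ℤ):ℝ) := by
    intro hcont
    have hev : ∀ᶠ t in 𝓝[<] ((m:ℤ):ℝ), dist (psi2sFn α t) (psi2sFn α ((m:ℤ):ℝ)) < u :=
      (Metric.tendsto_nhds.mp hcont u hu).filter_mono nhdsWithin_le_nhds
    have hlt : ∀ᶠ t in 𝓝[<] ((m:ℤ):ℝ), t < ((m:ℤ):ℝ) :=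
      eventually_mem_nhdsWithin
    obtain ⟨t, hd, htm⟩ := (hev.and hlt).exists
    rcases Stmt17.psi_before hα j htm with h | h
    · rw [hpsim, h, Real.dist_eq] at hd
      rw [abs_of_nonpos (by linarith)] at hd
      linarith
    · rw [hpsim, Real.dist_eq] at hd
      have := le_abs_self (psi2sFn α t - (u + v))
      linarith
  -- M is a discontinuity
  have hdM : ¬ ContinuousAt (psi2sFn α) ((M:ℤ):ℝ) := by
    intro hcont
    have hpsiM : psi2sFn α ((M:ℤ):ℝ) ≤ v - u := Stmt17.psi_le2 hα j ha' (le_refl _)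
    have hev : ∀ᶠ t in 𝓝[<] ((M:ℤ):ℝ), dist (psi2sFn α t) (psi2sFn α ((M:ℤ):ℝ)) < u :=
      (Metric.tendsto_nhds.mp hcont u hu).filter_mono nhdsWithin_le_nhds
    have hIoo : ∀ᶠ t in 𝓝[<] ((M:ℤ):ℝ), t ∈ Ioo (((M:ℤ):ℝ) - 1) ((M:ℤ):ℝ) :=
      Ioo_mem_nhdsLT_of_mem ⟨by linarith, le_refl _⟩
    obtain ⟨t, hd, ht⟩ := (hev.and hIoo).exists
    have hmt : ((m:ℤ):ℝ) ≤ t := by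
      have : ((m:ℤ):ℝ) ≤ ((M:ℤ):ℝ) - 1 := by
        have h' : (m:ℤ) ≤ M - 1 := by omega
        have h'' : ((m:ℤ):ℝ) ≤ ((M - 1:ℤ):ℝ) := by exact_mod_cast h'
        push_cast at h''
        linarith
      linarith [ht.1]
    have hpt : psi2sFn α t = u + v := Stmt17.psi_const hα j ha hmt ht.2
    rw [hpt, Real.dist_eq] at hd
    have := le_abs_self (u + v - psi2sFn α ((M:ℤ):ℝ))
    linarith
  show SuccessiveIn (XSet α) [m, M]
  constructor
  · intro x hx
    simp only [List.mem_cons, List.mem_singleton, List.not_mem_nil, or_false] at hx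
    rcases hx with rfl | rfl
    · exact ⟨hm1.trans_lt' (by omega), hdm⟩
    · exact ⟨by omega, hdM⟩
  · refine List.isChain_cons_cons.2 ⟨⟨hmM, ?_⟩, List.isChain_singleton _⟩
    intro z hz hcon
    obtain ⟨hz1, hz2⟩ := hcon
    refine hz.2 ?_
    have hmz : ((m:ℤ):ℝ) ≤ ((z:ℤ):ℝ) - 1 := by
      have h' : (m:ℤ) ≤ z - 1 := by omega
      have h'' : ((m:ℤ):ℝ) ≤ ((z - 1:ℤ):ℝ) := by exact_mod_cast h'
      push_cast at h''
      linarith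
    have hzM : ((z:ℤ):ℝ) + 1 ≤ ((M:ℤ):ℝ) := by
      have h' : (z:ℤ) + 1 ≤ M := by omega
      have h'' : ((z + 1:ℤ):ℝ) ≤ ((M:ℤ):ℝ) := by exact_mod_cast h'
      push_cast at h''
      linarith
    have key : psi2sFn α =ᶠ[𝓝 ((z:ℤ):ℝ)] fun _ => u + v := by
      refine Filter.eventuallyEq_of_mem (Ioo_mem_nhds (show ((z:ℤ):ℝ) - 1 < ((z:ℤ):ℝ) by linarith) (show ((z:ℤ):ℝ) < ((z:ℤ):ℝ) + 1 by linarith)) ?_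
      intro t ht
      exact Stmt17.psi_const hα j ha (by linarith [ht.1]) (by linarith [ht.2])
    exact key.continuousAt
end
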